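/- arXiv:2511.14298 — 9 statements merged into one kernel-verified Lean document; each statement's English description precedes it below -/
import Mathlib

section
/- For every n and every nonempty finite poset P, the maximum size of a family 𝓕 of subsets of [n] that admits a proper coloring with no rainbow copy of P equals the maximum size of a family 𝓖 of subsets of [n] that contains no copy of any finite poset Q such that Q minimally rainbow forces P. -/
/-- A (strong/induced) copy of the poset `P` in the poset `Q`: an injective map
reflecting and preserving the order. -/
def IsCopy {P Q : Type*} [PartialOrder P] [PartialOrder Q] (f : P → Q) : Prop :=
  Function.Injective f ∧ ∀ p p' : P, f p ≤ f p' ↔ p ≤ p'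

/-- A proper coloring of a poset: distinct comparable elements get distinct colors. -/
def ProperColoring {Q : Type*} [PartialOrder Q] (c : Q → ℕ) : Prop :=
  ∀ q q' : Q, q ≠ q' → (q ≤ q' ∨ q' ≤ q) → c q ≠ c q'

/-- `Q` rainbow forces `P`: every proper coloring of `Q` admits a rainbow copy of `P`. -/
def RainbowForces (Q : Type*) [PartialOrder Q] (P : Type*) [PartialOrder P] : Prop :=
  ∀ c : Q → ℕ, ProperColoring c → ∃ f : P → Q, IsCopy f ∧ Function.Injective (c ∘ f)

/-- `Q` minimally rainbow forces `P`: `Q` rainbow forces `P` but no one-element-deleted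
induced subposet of `Q` does. -/
def MinRainbowForces (Q : Type*) [PartialOrder Q] (P : Type*) [PartialOrder P] : Prop :=
  RainbowForces Q P ∧ ∀ q : Q, ¬RainbowForces {x : Q // x ≠ q} P

/-- A copy of the poset `P` in the family `𝓕` of subsets of `[n]`. -/
def FamilyCopy (n : ℕ) (𝓕 : Finset (Finset (Fin n))) (P : Type*) [PartialOrder P]
    (f : P → Finset (Fin n)) : Prop :=
  (∀ p, f p ∈ 𝓕) ∧ Function.Injective f ∧ ∀ p p' : P, f p ⊆ f p' ↔ p ≤ p'

/-- A proper coloring of a family of sets: distinct members related by inclusion get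
distinct colors. -/
def FamilyProperColoring (n : ℕ) (𝓕 : Finset (Finset (Fin n)))
    (c : Finset (Fin n) → ℕ) : Prop :=
  ∀ A ∈ 𝓕, ∀ B ∈ 𝓕, A ≠ B → A ⊆ B → c A ≠ c B

/-- `𝓕` admits a proper coloring with no rainbow copy of `P`. -/
def AvoidsRainbow (n : ℕ) (P : Type*) [PartialOrder P] (𝓕 : Finset (Finset (Fin n))) : Prop :=
  ∃ c : Finset (Fin n) → ℕ, FamilyProperColoring n 𝓕 c ∧
    ¬∃ f : P → Finset (Fin n), FamilyCopy n 𝓕 P f ∧ Function.Injective (c ∘ f)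

/-- A bundled finite poset. -/
structure FinPoset where
  carrier : Type
  [po : PartialOrder carrier]
  [ft : Fintype carrier]

attribute [instance] FinPoset.po FinPoset.ft

lemma IsCopy.comp {A B C : Type*} [PartialOrder A] [PartialOrder B] [PartialOrder C]
    {f : A → B} {g : B → C} (hf : IsCopy f) (hg : IsCopy g) : IsCopy (g ∘ f) :=
  ⟨hg.1.comp hf.1, fun p p' => (hg.2 _ _).trans (hf.2 _ _)⟩

lemma exists_min (P : Type) [PartialOrder P] :
    ∀ (N : ℕ) (Q : Type) [PartialOrder Q] [Fintype Q], Fintype.card Q ≤ N →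
      RainbowForces Q P →
      ∃ Q' : FinPoset, MinRainbowForces Q'.carrier P ∧ ∃ g : Q'.carrier → Q, IsCopy g := by
  intro N
  induction N with
  | zero =>
    intro Q _ _ hcard h
    by_cases hmin : ∀ q : Q, ¬RainbowForces {x : Q // x ≠ q} P
    · exact ⟨⟨Q⟩, ⟨h, hmin⟩, id, Function.injective_id, fun _ _ => Iff.rfl⟩
    · push_neg at hmin
      obtain ⟨q, _⟩ := hmin
      have : 0 < Fintype.card Q := Fintype.card_pos_iff.mpr ⟨q⟩
      omega
  | succ N ih =>
    intro Q _ _ hcard h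
    by_cases hmin : ∀ q : Q, ¬RainbowForces {x : Q // x ≠ q} P
    · exact ⟨⟨Q⟩, ⟨h, hmin⟩, id, Function.injective_id, fun _ _ => Iff.rfl⟩
    · push_neg at hmin
      obtain ⟨q, hq⟩ := hmin
      haveI : DecidableEq Q := Classical.decEq Q
      have hlt : Fintype.card {x : Q // x ≠ q} < Fintype.card Q :=
        Fintype.card_subtype_lt (x := q) (by simp)
      obtain ⟨Q', hQ', g, hg⟩ := ih {x : Q // x ≠ q} (by omega) hq
      exact ⟨Q', hQ', Subtype.val ∘ g,
        hg.comp ⟨Subtype.val_injective, fun _ _ => Subtype.coe_le_coe⟩⟩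

/-- For every `n` and every nonempty finite poset `P`, the maximum size of a
family of subsets of `[n]` admitting a proper coloring with no rainbow copy of `P` equals the
maximum size of a family of subsets of `[n]` containing no copy of any finite poset `Q` that
minimally rainbow forces `P`. -/
theorem statement0 (n : ℕ) (P : Type) [PartialOrder P] [Fintype P] [Nonempty P] :
    sSup {m : ℕ | ∃ 𝓕 : Finset (Finset (Fin n)), 𝓕.card = m ∧ AvoidsRainbow n P 𝓕} =
    sSup {m : ℕ | ∃ 𝓖 : Finset (Finset (Fin n)), 𝓖.card = m ∧
      ∀ Q : FinPoset, MinRainbowForces Q.carrier P →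
        ¬∃ f : Q.carrier → Finset (Fin n), FamilyCopy n 𝓖 Q.carrier f} := by
  have hset : {m : ℕ | ∃ 𝓕 : Finset (Finset (Fin n)), 𝓕.card = m ∧ AvoidsRainbow n P 𝓕} =
      {m : ℕ | ∃ 𝓖 : Finset (Finset (Fin n)), 𝓖.card = m ∧
        ∀ Q : FinPoset, MinRainbowForces Q.carrier P →
          ¬∃ f : Q.carrier → Finset (Fin n), FamilyCopy n 𝓖 Q.carrier f} := by
    ext m
    constructor
    · rintro ⟨𝓕, hm, c, hc, hno⟩
      refine ⟨𝓕, hm, fun Q hQ hf => ?_⟩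
      obtain ⟨f, hmem, hinj, hiff⟩ := hf
      have hproper : ProperColoring (c ∘ f) := by
        intro q q' hne hcomp
        have hfne : f q ≠ f q' := fun h => hne (hinj h)
        rcases hcomp with hle | hle
        · exact hc (f q) (hmem q) (f q') (hmem q') hfne ((hiff q q').mpr hle)
        · exact fun h => hc (f q') (hmem q') (f q) (hmem q) hfne.symm
            ((hiff q' q).mpr hle) h.symm
      obtain ⟨g, hg, hginj⟩ := hQ.1 (c ∘ f) hproper
      refine hno ⟨f ∘ g, ⟨fun p => hmem (g p), hinj.comp hg.1,
        fun p p' => (hiff (g p) (g p')).trans (hg.2 p p')⟩, hginj⟩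
    · rintro ⟨𝓖, hm, hG⟩
      refine ⟨𝓖, hm, ?_⟩
      by_contra h
      unfold AvoidsRainbow at h
      push_neg at h
      have hRF : RainbowForces {A : Finset (Fin n) // A ∈ 𝓖} P := by
        intro c₀ hc₀
        set c : Finset (Fin n) → ℕ := fun A => if hA : A ∈ 𝓖 then c₀ ⟨A, hA⟩ else 0 with hcdef
        have hcp : FamilyProperColoring n 𝓖 c := by
          intro A hA B hB hne hsub
          simp only [hcdef, dif_pos hA, dif_pos hB]
          exact hc₀ ⟨A, hA⟩ ⟨B, hB⟩ (fun h => hne (congrArg Subtype.val h))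
            (Or.inl hsub)
        obtain ⟨f, ⟨hmem, hinj, hiff⟩, hrain⟩ := h c hcp
        refine ⟨fun p => ⟨f p, hmem p⟩, ⟨fun p p' h => hinj (congrArg Subtype.val h),
          fun p p' => ?_⟩, fun p p' h => ?_⟩
        · exact (Subtype.mk_le_mk.trans (Finset.le_iff_subset.trans (hiff p p')))
        · apply hrain
          simpa [hcdef, Function.comp, dif_pos (hmem p), dif_pos (hmem p')] using h
      obtain ⟨Q', hQ', g, hg⟩ :=
        exists_min P (Fintype.card {A : Finset (Fin n) // A ∈ 𝓖}) _ le_rfl hRF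
      refine hG Q' hQ' ⟨fun q => (g q).1, fun q => (g q).2,
        fun q q' h => hg.1 (Subtype.ext h), fun q q' => ?_⟩
      exact (Finset.le_iff_subset.symm.trans Subtype.coe_le_coe).trans (hg.2 q q')
  rw [hset]
end

section
/- For every finite poset P on k elements, there exists a finite poset Q of cardinality k + (the number of unordered pairs of distinct incomparable elements of P) such that Q rainbow forces P. -/
/-! ### Auxiliary construction

Fix an injective indexing `idx : P → ℕ`.  For `p : P`, let `incompSet idx p` be the set of
elements with smaller index that are incomparable to `p`, and `wt idx p := 1 + |incompSet idx p|`.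
The forcing poset `QQ` is the lexicographic sum over `P` of chains of lengths `wt idx p`. -/

section RainbowAux

variable {P : Type} [PartialOrder P] [Fintype P]

open Classical in
/-- Elements of smaller index incomparable to `p`. -/
noncomputable def incompSet (idx : P → ℕ) (p : P) : Finset P :=
  Finset.univ.filter fun q => idx q < idx p ∧ ¬q ≤ p ∧ ¬p ≤ q

/-- Length of the chain replacing `p`. -/
noncomputable def wt (idx : P → ℕ) (p : P) : ℕ :=
  1 + (incompSet idx p).card

/-- The forcing poset: lexicographic sum over `P` of chains of lengths `wt idx p`. -/
def QQ (P : Type) [PartialOrder P] [Fintype P] (idx : P → ℕ) (K : ℕ) : Type :=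
  {x : Lex (P × Fin K) // ((ofLex x).2 : ℕ) < wt idx ((ofLex x).1)}

noncomputable instance QQ.instPartialOrder (idx : P → ℕ) (K : ℕ) :
    PartialOrder (QQ P idx K) :=
  Subtype.partialOrder _

noncomputable instance QQ.instFintype (idx : P → ℕ) (K : ℕ) : Fintype (QQ P idx K) := by
  classical
  haveI : Fintype (Lex (P × Fin K)) := Fintype.ofEquiv (P × Fin K) toLex
  unfold QQ
  infer_instance

/-- `QQ` is equivalent to the disjoint sum of the chains. -/
noncomputable def QQEquiv (idx : P → ℕ) (K : ℕ) (hK : ∀ p, wt idx p ≤ K) :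
    QQ P idx K ≃ Σ p : P, Fin (wt idx p) where
  toFun x := ⟨(ofLex x.val).1, ⟨((ofLex x.val).2 : ℕ), x.2⟩⟩
  invFun s := ⟨toLex (s.1, ⟨(s.2 : ℕ), lt_of_lt_of_le s.2.isLt (hK s.1)⟩), s.2.isLt⟩
  left_inv x := rfl
  right_inv s := rfl

end RainbowAux

/-- For every finite poset `P` on `k` elements there exists a finite poset `Q`
of cardinality `k +` (the number of unordered pairs of distinct incomparable elements of `P`)
that rainbow forces `P`. -/
theorem statement1 (P : Type) [PartialOrder P] [Fintype P] (k : ℕ)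
    (hk : Fintype.card P = k) :
    ∃ Q : FinPoset,
      Fintype.card Q.carrier =
        k + Nat.card {s : Finset P // s.card = 2 ∧ ∀ x ∈ s, ∀ y ∈ s, x ≠ y → ¬x ≤ y} ∧
      RainbowForces Q.carrier P := by
  classical
  let e : P ≃ Fin k := Fintype.equivFinOfCardEq hk
  set idx : P → ℕ := fun p => (e p : ℕ) with hidxdef
  have hidx : Function.Injective idx := fun p q h => e.injective (Fin.ext h)
  have hidxlt : ∀ p : P, idx p < k := fun p => (e p).isLt
  have hK : ∀ p : P, wt idx p ≤ k + 1 := by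
    intro p
    have h1 : (incompSet idx p).card ≤ Fintype.card P := by
      simpa using Finset.card_le_univ (incompSet idx p)
    unfold wt
    omega
  -- membership in incompSet
  have hmem : ∀ p q : P,
      q ∈ incompSet idx p ↔ idx q < idx p ∧ ¬q ≤ p ∧ ¬p ≤ q := by
    intro p q; simp [incompSet]
  refine ⟨⟨QQ P idx (k + 1)⟩, ?_, ?_⟩
  · -- cardinality computation
    have hcard1 : Fintype.card (QQ P idx (k + 1)) = ∑ p : P, wt idx p := by
      rw [Fintype.card_congr (QQEquiv idx (k + 1) hK), Fintype.card_sigma]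
      simp
    have hcard2 : ∑ p : P, wt idx p = k + ∑ p : P, (incompSet idx p).card := by
      unfold wt
      rw [Finset.sum_add_distrib]
      simp [hk]
    have hcard3 : ∑ p : P, (incompSet idx p).card =
        (Finset.univ.filter fun s : Finset P =>
          s.card = 2 ∧ ∀ x ∈ s, ∀ y ∈ s, x ≠ y → ¬x ≤ y).card := by
      rw [← Finset.card_sigma]
      refine Finset.card_bij (fun a _ => ({a.1, a.2} : Finset P)) ?_ ?_ ?_
      · rintro ⟨p, q⟩ ha
        rw [Finset.mem_sigma] at ha
        obtain ⟨hlt, hqp, hpq⟩ := (hmem p q).mp ha.2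
        have hne : p ≠ q := fun h => hqp (h ▸ le_refl p)
        rw [Finset.mem_filter]
        refine ⟨Finset.mem_univ _, Finset.card_pair hne, ?_⟩
        intro x hx y hy hxy
        simp only [Finset.mem_insert, Finset.mem_singleton] at hx hy
        rcases hx with rfl | rfl <;> rcases hy with rfl | rfl
        · exact absurd rfl hxy
        · exact hpq
        · exact hqp
        · exact absurd rfl hxy
      · rintro ⟨p, q⟩ ha ⟨p', q'⟩ ha' hpair
        rw [Finset.mem_sigma] at ha ha'
        have h1 := ((hmem p q).mp ha.2).1
        have h2 := ((hmem p' q').mp ha'.2).1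
        have hset : ({p, q} : Finset P) = {p', q'} := hpair
        have hp' : p' = p ∨ p' = q := by
          have : p' ∈ ({p, q} : Finset P) := hset ▸ Finset.mem_insert_self _ _
          simpa using this
        have hq' : q' = p ∨ q' = q := by
          have : q' ∈ ({p, q} : Finset P) := by
            rw [hset]; exact Finset.mem_insert_of_mem (Finset.mem_singleton_self _)
          simpa using this
        rcases hp' with rfl | rfl
        · rcases hq' with rfl | rfl
          · omega
          · rfl
        · rcases hq' with rfl | rfl
          · omega
          · omega
      · intro s hs
        rw [Finset.mem_filter] at hs
        obtain ⟨-, hs2, hsanti⟩ := hs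
        obtain ⟨x, y, hxy, rfl⟩ := Finset.card_eq_two.mp hs2
        have hmemx : x ∈ ({x, y} : Finset P) := Finset.mem_insert_self _ _
        have hmemy : y ∈ ({x, y} : Finset P) :=
          Finset.mem_insert_of_mem (Finset.mem_singleton_self _)
        have hidxne : idx x ≠ idx y := fun h => hxy (hidx h)
        rcases lt_or_gt_of_ne hidxne with h | h
        · refine ⟨⟨y, x⟩, ?_, ?_⟩
          · rw [Finset.mem_sigma]
            exact ⟨Finset.mem_univ _,
              (hmem y x).mpr ⟨h, hsanti x hmemx y hmemy hxy, hsanti y hmemy x hmemx hxy.symm⟩⟩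
          · exact Finset.pair_comm y x
        · refine ⟨⟨x, y⟩, ?_, ?_⟩
          · rw [Finset.mem_sigma]
            exact ⟨Finset.mem_univ _,
              (hmem x y).mpr ⟨h, hsanti y hmemy x hmemx hxy.symm, hsanti x hmemx y hmemy hxy⟩⟩
          · rfl
    have hnat : Nat.card {s : Finset P // s.card = 2 ∧ ∀ x ∈ s, ∀ y ∈ s, x ≠ y → ¬x ≤ y} =
        (Finset.univ.filter fun s : Finset P =>
          s.card = 2 ∧ ∀ x ∈ s, ∀ y ∈ s, x ≠ y → ¬x ≤ y).card := by
      rw [Nat.card_eq_fintype_card, Fintype.card_subtype]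
    rw [hcard1, hcard2, hcard3, hnat]
  · -- rainbow forcing
    intro c hc
    -- abbreviations
    set fib : QQ P idx (k + 1) → P := fun x => (ofLex x.val).1 with hfibdef
    set ht : QQ P idx (k + 1) → Fin (k + 1) := fun x => (ofLex x.val).2 with hhtdef
    -- order characterization
    have le_char : ∀ x y : QQ P idx (k + 1),
        x ≤ y ↔ (fib x < fib y ∨ (fib x = fib y ∧ ht x ≤ ht y)) := by
      intro x y
      exact Prod.Lex.le_iff
    -- chain elements
    have hwtpos : ∀ p : P, 0 < wt idx p := by intro p; unfold wt; omega
    let mkel : (p : P) → (j : Fin (wt idx p)) → QQ P idx (k + 1) := fun p j =>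
      ⟨toLex (p, ⟨(j : ℕ), lt_of_lt_of_le j.isLt (hK p)⟩), j.isLt⟩
    have hmkfib : ∀ p j, fib (mkel p j) = p := fun p j => rfl
    have hmkht : ∀ p j, (ht (mkel p j) : ℕ) = (j : ℕ) := fun p j => rfl
    -- elements in the same fiber are comparable
    have hfibcomp : ∀ x y : QQ P idx (k + 1), fib x = fib y → x ≤ y ∨ y ≤ x := by
      intro x y hxy
      rcases le_total (ht x) (ht y) with h | h
      · exact Or.inl ((le_char x y).mpr (Or.inr ⟨hxy, h⟩))
      · exact Or.inr ((le_char y x).mpr (Or.inr ⟨hxy.symm, h⟩))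
    -- greedy choice of an element in fiber `p` avoiding a small set of colors
    have greedy : ∀ (p : P) (T : Finset ℕ), T.card < wt idx p →
        ∃ x : QQ P idx (k + 1), fib x = p ∧ c x ∉ T := by
      intro p T hT
      have hmkinj : Function.Injective (mkel p) := by
        intro j j' h
        have : (ht (mkel p j) : ℕ) = (ht (mkel p j') : ℕ) := by rw [h]
        rw [hmkht, hmkht] at this
        exact Fin.ext this
      have hcinj : Function.Injective (fun j : Fin (wt idx p) => c (mkel p j)) := by
        intro j j' h
        by_contra hne
        have hne' : mkel p j ≠ mkel p j' := fun hh => hne (hmkinj hh)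
        exact hc _ _ hne' (hfibcomp _ _ (by rw [hmkfib, hmkfib])) h
      have himg : (Finset.univ.image fun j : Fin (wt idx p) => c (mkel p j)).card
          = wt idx p := by
        rw [Finset.card_image_of_injective _ hcinj, Finset.card_univ, Fintype.card_fin]
      have hnot : ¬(Finset.univ.image fun j : Fin (wt idx p) => c (mkel p j)) ⊆ T := by
        intro hsub
        have := Finset.card_le_card hsub
        omega
      obtain ⟨col, hcol, hcolT⟩ := Finset.not_subset.mp hnot
      obtain ⟨j, -, rfl⟩ := Finset.mem_image.mp hcol
      exact ⟨mkel p j, hmkfib p j, hcolT⟩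
    -- main induction: a fiber-respecting map rainbow on the first i indices
    have main : ∀ i : ℕ, ∃ f : P → QQ P idx (k + 1),
        (∀ p, fib (f p) = p) ∧
        ∀ p q : P, idx p < i → idx q < i → (¬p ≤ q ∧ ¬q ≤ p) → c (f p) ≠ c (f q) := by
      intro i
      induction i with
      | zero =>
        refine ⟨fun p => mkel p ⟨0, hwtpos p⟩, fun p => hmkfib _ _, ?_⟩
        intro p q hp
        omega
      | succ i ih =>
        obtain ⟨f, hf1, hf2⟩ := ih
        by_cases hex : ∃ p₀ : P, idx p₀ = i
        · obtain ⟨p₀, hp₀⟩ := hex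
          set T : Finset ℕ := (incompSet idx p₀).image (fun q => c (f q)) with hTdef
          have hTcard : T.card < wt idx p₀ := by
            have := Finset.card_image_le (s := incompSet idx p₀) (f := fun q => c (f q))
            unfold wt
            rw [hTdef]
            omega
          obtain ⟨x, hxfib, hxT⟩ := greedy p₀ T hTcard
          have hcolT : ∀ q : P, q ∈ incompSet idx p₀ → c (f q) ∈ T := by
            intro q hq
            exact Finset.mem_image_of_mem _ hq
          refine ⟨Function.update f p₀ x, ?_, ?_⟩
          · intro p
            by_cases h : p = p₀
            · subst h; rw [Function.update_self]; exact hxfib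
            · rw [Function.update_of_ne h]; exact hf1 p
          · intro p q hp hq hinc
            have hpq : p ≠ q := fun h => hinc.1 (h ▸ le_refl p)
            have hstep : ∀ r : P, idx r < i + 1 → r ≠ p₀ → idx r < i := by
              intro r hr hrne
              have : idx r ≠ i := fun h => hrne (hidx (h.trans hp₀.symm))
              omega
            by_cases hpp : p = p₀
            · subst hpp
              have hqne : q ≠ p := fun h => hpq h.symm
              have hqlt : idx q < i := hstep q hq hqne
              have hqmem : q ∈ incompSet idx p := by
                rw [hmem]
                exact ⟨hp₀ ▸ hqlt, hinc.2, hinc.1⟩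
              rw [Function.update_self, Function.update_of_ne hqne]
              intro h
              exact hxT (h ▸ hcolT q hqmem)
            · by_cases hqq : q = p₀
              · subst hqq
                have hplt : idx p < i := hstep p hp hpp
                have hpmem : p ∈ incompSet idx q := by
                  rw [hmem]
                  exact ⟨hp₀ ▸ hplt, hinc.1, hinc.2⟩
                rw [Function.update_self, Function.update_of_ne hpp]
                intro h
                exact hxT (h ▸ hcolT p hpmem)
              · rw [Function.update_of_ne hpp, Function.update_of_ne hqq]
                exact hf2 p q (hstep p hp hpp) (hstep q hq hqq) hinc
        · refine ⟨f, hf1, fun p q hp hq hinc => hf2 p q ?_ ?_ hinc⟩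
          · have : idx p ≠ i := fun h => hex ⟨p, h⟩
            omega
          · have : idx q ≠ i := fun h => hex ⟨q, h⟩
            omega
    obtain ⟨f, hf1, hf2⟩ := main k
    have hfinj : Function.Injective f := by
      intro p p' h
      have := hf1 p
      rw [h, hf1 p'] at this
      exact this.symm
    have hiff : ∀ p p' : P, f p ≤ f p' ↔ p ≤ p' := by
      intro p p'
      rw [le_char, hf1 p, hf1 p']
      constructor
      · rintro (h | ⟨h, -⟩)
        · exact h.le
        · exact h.le
      · intro h
        rcases h.lt_or_eq with h | h
        · exact Or.inl h
        · subst h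
          exact Or.inr ⟨rfl, le_refl _⟩
    refine ⟨f, ⟨hfinj, hiff⟩, ?_⟩
    intro p p' h
    simp only [Function.comp_apply] at h
    by_contra hne
    by_cases hcomp : p ≤ p' ∨ p' ≤ p
    · have hfne : f p ≠ f p' := fun hh => hne (hfinj hh)
      have : f p ≤ f p' ∨ f p' ≤ f p := by
        rcases hcomp with hh | hh
        · exact Or.inl ((hiff p p').mpr hh)
        · exact Or.inr ((hiff p' p).mpr hh)
      exact hc _ _ hfne this h
    · push_neg at hcomp
      exact hf2 p p' (hidxlt p) (hidxlt p') ⟨hcomp.1, hcomp.2⟩ h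
end

section
/- Let P be a nonempty finite poset on k elements and let m(P) be the least natural number m such that there exists a partial order on Fin m that rainbow forces P. Then m(P) ≥ k, and m(P) = k if and only if P is a linear order. -/
/-- Let `P` be a nonempty finite poset on `k` elements and let `m(P)` be the
least `m` such that some partial order on `Fin m` rainbow forces `P`. Then `m(P) ≥ k`, and
`m(P) = k` if and only if `P` is a linear order. -/
theorem statement2 (P : Type) [PartialOrder P] [Fintype P] [Nonempty P] (k : ℕ)
    (hk : Fintype.card P = k) (mP : ℕ)
    (hm : IsLeast {m : ℕ |
      ∃ inst : PartialOrder (Fin m), @RainbowForces (Fin m) inst P inferInstance} mP) :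
    k ≤ mP ∧ (mP = k ↔ ∀ x y : P, x ≤ y ∨ y ≤ x) := by
  obtain ⟨⟨inst, hQ⟩, hmin⟩ := hm
  have hval : @ProperColoring (Fin mP) inst (fun q => q.val) := by
    intro q q' hne _ h
    exact hne (Fin.ext h)
  obtain ⟨f, hf, -⟩ := hQ (fun q => q.val) hval
  have hle : k ≤ mP := by
    calc k = Fintype.card P := hk.symm
    _ ≤ Fintype.card (Fin mP) := Fintype.card_le_of_injective f hf.1
    _ = mP := Fintype.card_fin mP
  refine ⟨hle, ?_, ?_⟩
  · -- mP = k → linear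
    intro heq x y
    by_contra hxy
    push_neg at hxy
    obtain ⟨hxy1, hxy2⟩ := hxy
    have hne : x ≠ y := by rintro rfl; exact hxy1 le_rfl
    have hfne : f x ≠ f y := fun h => hne (hf.1 h)
    classical
    set c : Fin mP → ℕ := fun q => if q = f y then (f x).val else q.val with hcdef
    have hcp : @ProperColoring (Fin mP) inst c := by
      intro q q' hqq hcomp
      simp only [hcdef]
      split_ifs with h1 h2 h3
      · exact absurd (h1.trans h2.symm) hqq
      · intro hv
        have hq' : q' = f x := Fin.ext hv.symm
        subst h1; subst hq'
        rcases hcomp with h | h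
        · exact hxy2 ((hf.2 y x).mp h)
        · exact hxy1 ((hf.2 x y).mp h)
      · intro hv
        have hq : q = f x := Fin.ext hv
        subst h3; subst hq
        rcases hcomp with h | h
        · exact hxy1 ((hf.2 x y).mp h)
        · exact hxy2 ((hf.2 y x).mp h)
      · intro hv
        exact hqq (Fin.ext hv)
    obtain ⟨g, hg, hrg⟩ := hQ c hcp
    have hgsurj : Function.Surjective g := by
      have hcard : Fintype.card P = Fintype.card (Fin mP) := by
        rw [hk, Fintype.card_fin, heq]
      exact (Fintype.bijective_iff_injective_and_card g).mpr ⟨hg.1, hcard⟩ |>.2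
    obtain ⟨p, hp⟩ := hgsurj (f y)
    obtain ⟨p', hp'⟩ := hgsurj (f x)
    have hpp : p ≠ p' := by
      rintro rfl
      exact hfne (hp'.symm.trans hp)
    apply hpp
    apply hrg
    simp only [Function.comp_apply, hp, hp', hcdef]
    split_ifs <;> simp
  · -- linear → mP = k
    intro hlin
    refine le_antisymm (hmin ?_) hle
    classical
    letI L : LinearOrder P :=
      { (inferInstance : PartialOrder P) with
        le_total := hlin
        toDecidableLE := Classical.decRel _ }
    refine ⟨inferInstance, ?_⟩
    intro c hc
    have hcinj : Function.Injective c := by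
      intro a b h
      by_contra hne
      exact hc a b hne (le_total a b) h
    let e := monoEquivOfFin P hk
    refine ⟨e.symm, ⟨e.symm.injective, fun p p' => e.symm.le_iff_le⟩, hcinj.comp e.symm.injective⟩
end

section
/- For every k ≥ 1, every finite poset Q that rainbow forces A_k has at least (k+1 choose 2) elements. -/
/-- The antichain poset `A_k` on `k` elements: `Fin k` ordered by equality. -/
def AC (k : ℕ) := Fin k

instance (k : ℕ) : PartialOrder (AC k) where
  le x y := x = y
  le_refl _ := rfl
  le_trans _ _ _ h h' := Eq.trans h h'
  le_antisymm _ _ h _ := h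

instance (k : ℕ) : Fintype (AC k) := Fin.fintype k

lemma AC_le_iff {k : ℕ} {x y : AC k} : x ≤ y ↔ x = y := Iff.rfl

lemma AC_card (k : ℕ) : Fintype.card (AC k) = k := Fintype.card_fin k

/-- A rainbow forcing poset contains an antichain of size `k`. -/
lemma exists_antichain (k : ℕ) (Q : Type) [PartialOrder Q] [Fintype Q]
    (h : RainbowForces Q (AC k)) :
    ∃ S : Finset Q, S.card = k ∧ ∀ x ∈ S, ∀ y ∈ S, x ≤ y → x = y := by
  classical
  have hproper : ProperColoring (fun q : Q => ((Fintype.equivFin Q) q : ℕ)) := by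
    intro q q' hne _ hc
    exact hne ((Fintype.equivFin Q).injective (Fin.val_injective hc))
  obtain ⟨f, ⟨finj, ford⟩, -⟩ := h _ hproper
  refine ⟨Finset.univ.image f, ?_, ?_⟩
  · rw [Finset.card_image_of_injective _ finj, Finset.card_univ, AC_card]
  · intro x hx y hy hxy
    simp only [Finset.mem_image] at hx hy
    obtain ⟨p, -, rfl⟩ := hx
    obtain ⟨p', -, rfl⟩ := hy
    exact congrArg f ((ford p p').mp hxy)

/-- Removing an antichain from a poset rainbow forcing `A (k+1)` leaves a poset
rainbow forcing `A k`. -/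
lemma peel (k : ℕ) (Q : Type) [PartialOrder Q] [Fintype Q] (S : Finset Q)
    (hS : ∀ x ∈ S, ∀ y ∈ S, x ≤ y → x = y)
    (h : RainbowForces Q (AC (k + 1))) :
    RainbowForces {x : Q // x ∉ S} (AC k) := by
  classical
  intro c' hc'
  set c : Q → ℕ := fun q => if hq : q ∈ S then 0 else c' ⟨q, hq⟩ + 1 with hcdef
  have hcS : ∀ q (hq : q ∈ S), c q = 0 := by intro q hq; simp [hcdef, hq]
  have hcnS : ∀ q (hq : q ∉ S), c q = c' ⟨q, hq⟩ + 1 := by intro q hq; simp [hcdef, hq]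
  have hproper : ProperColoring c := by
    intro q q' hne hcomp
    by_cases hq : q ∈ S <;> by_cases hq' : q' ∈ S
    · exact absurd (hcomp.elim (hS q hq q' hq') (fun hle => (hS q' hq' q hq hle).symm)) hne
    · rw [hcS q hq, hcnS q' hq']; omega
    · rw [hcnS q hq, hcS q' hq']; omega
    · rw [hcnS q hq, hcnS q' hq']
      have := hc' ⟨q, hq⟩ ⟨q', hq'⟩ (by simpa [Subtype.ext_iff] using hne) hcomp
      omega
  obtain ⟨f, ⟨finj, ford⟩, frb⟩ := h c hproper
  -- at most one index maps into S
  set s : Finset (Fin (k + 1)) := Finset.univ.filter (fun i => f i ∉ S) with hsdef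
  have hsk : k ≤ s.card := by
    have hle1 : (Finset.univ.filter (fun i : Fin (k + 1) => f i ∈ S)).card ≤ 1 := by
      apply Finset.card_le_one.mpr
      intro i hi j hj
      simp only [Finset.mem_filter] at hi hj
      have : c (f i) = c (f j) := by rw [hcS _ hi.2, hcS _ hj.2]
      exact frb this
    have := Finset.card_filter_add_card_filter_not
      (s := (Finset.univ : Finset (Fin (k + 1)))) (p := fun i => f i ∈ S)
    simp only [Finset.card_univ, Fintype.card_fin] at this
    have hs' : (Finset.univ.filter (fun i : Fin (k + 1) => ¬ f i ∈ S)).card = s.card := rfl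
    omega
  set e := s.orderEmbOfCardLe hsk with hedef
  have hmem : ∀ j : Fin k, f (e j) ∉ S := by
    intro j
    have := Finset.orderEmbOfCardLe_mem s hsk j
    simp only [hsdef, Finset.mem_filter] at this
    exact this.2
  refine ⟨fun j => ⟨f (e j), hmem j⟩, ⟨?_, ?_⟩, ?_⟩
  · intro j j' hjj'
    exact e.injective (finj (congrArg Subtype.val hjj'))
  · intro p p'
    rw [Subtype.mk_le_mk, ford (e p) (e p'), AC_le_iff, AC_le_iff (x := e p) (y := e p')]
    constructor
    · intro hpp'; exact e.injective (by exact_mod_cast hpp')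
    · intro hpp'; rw [hpp']
  · intro j j' hjj'
    simp only [Function.comp_apply] at hjj'
    have : c (f (e j)) = c (f (e j')) := by
      rw [hcnS _ (hmem j), hcnS _ (hmem j'), hjj']
    exact e.injective (frb this)

lemma main_bound (k : ℕ) : ∀ (Q : Type) [PartialOrder Q] [Fintype Q],
    RainbowForces Q (AC k) → (k + 1).choose 2 ≤ Fintype.card Q := by
  induction k with
  | zero => intro Q _ _ _; simp
  | succ k ih =>
    intro Q _ _ h
    classical
    obtain ⟨S, hcard, hanti⟩ := exists_antichain (k + 1) Q h
    have h' := peel k Q S hanti h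
    have hIH := ih {x : Q // x ∉ S} h'
    have hsub : Fintype.card {x : Q // x ∉ S} = Fintype.card Q - S.card := by
      rw [Fintype.card_subtype_compl, Fintype.card_coe]
    have hSle : S.card ≤ Fintype.card Q := S.card_le_univ
    have hchoose : (k + 2).choose 2 = (k + 1).choose 1 + (k + 1).choose 2 :=
      Nat.choose_succ_succ (k + 1) 1
    rw [Nat.choose_one_right] at hchoose
    show (k + 2).choose 2 ≤ Fintype.card Q
    omega

/-- For every `k ≥ 1`, every finite poset `Q` that rainbow forces the
antichain `A_k` has at least `(k+1).choose 2` elements. -/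
theorem statement3 (k : ℕ) (hk : 1 ≤ k) (Q : Type) [PartialOrder Q] [Fintype Q]
    (h : RainbowForces Q (AC k)) :
    (k + 1).choose 2 ≤ Fintype.card Q := by
  exact main_bound k Q h
end

section
/- If P is a finite poset on k elements that is not an antichain (i.e. there exist distinct p, q in P with p ≤ q), then there exists a finite poset Q with fewer than (k+1 choose 2) elements that rainbow forces P. -/
/-- If `P` is a finite poset on `k` elements that is not an antichain, then
there is a finite poset `Q` with fewer than `(k+1).choose 2` elements that rainbow forces `P`. -/
theorem statement4 (P : Type) [PartialOrder P] [Fintype P] (k : ℕ)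
    (hk : Fintype.card P = k) (h : ∃ p q : P, p ≠ q ∧ p ≤ q) :
    ∃ Q : FinPoset, Fintype.card Q.carrier < (k + 1).choose 2 ∧
      RainbowForces Q.carrier P := by
  classical
  obtain ⟨p0, q0, hne0, hle0⟩ := h
  have hlt0 : p0 < q0 := lt_of_le_of_ne hle0 hne0
  haveI : Fintype (LinearExtension P) := ‹Fintype P›
  have hcardL : Fintype.card (LinearExtension P) = k := by
    rw [← hk]; exact Fintype.card_congr (Equiv.refl P)
  let e : Fin k ≃o LinearExtension P := monoEquivOfFin _ hcardL
  let ι : P → Fin k := fun p => e.symm (toLinearExtension p)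
  have ιinj : Function.Injective ι := by
    intro a b hab
    have h2 : toLinearExtension a = toLinearExtension b := e.symm.injective hab
    exact h2
  have ιmono : ∀ {a b : P}, a < b → ι a < ι b := by
    intro a b hab
    have h1 : toLinearExtension a ≤ toLinearExtension b := toLinearExtension.monotone hab.le
    have h2 : toLinearExtension a ≠ toLinearExtension b := fun hEq => hab.ne (by exact hEq)
    exact e.symm.strictMono (lt_of_le_of_ne h1 h2)
  have hbij : Function.Bijective ι :=
    (Fintype.bijective_iff_injective_and_card ι).2 ⟨ιinj, by simp [hk]⟩
  set s : P → ℕ := fun p => (Finset.univ.filter (fun r => ι r < ι p ∧ ¬ r ≤ p)).card + 1 with hs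
  have hspos : ∀ p, 0 < s p := fun p => Nat.succ_pos _
  -- counting
  have hcount : ∀ p : P, (Finset.univ.filter (fun r => ι r < ι p)).card = (ι p : ℕ) := by
    intro p
    have h1 : (Finset.univ.filter (fun r => ι r < ι p)).card
        = (Finset.univ.filter (fun j : Fin k => j < ι p)).card := by
      apply Finset.card_bij (fun r _ => ι r)
      · intro a ha; simp only [Finset.mem_filter, Finset.mem_univ, true_and] at ha ⊢; exact ha
      · intro a _ b _ hab; exact ιinj hab
      · intro j hj
        simp only [Finset.mem_filter, Finset.mem_univ, true_and] at hj
        obtain ⟨r, hr⟩ := hbij.2 j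
        exact ⟨r, by simp [hr, hj], hr⟩
    rw [h1]
    have h2 : Finset.univ.filter (fun j : Fin k => j < ι p) = Finset.Iio (ι p) := by
      ext j; simp
    rw [h2, Fin.card_Iio]
  have hs_le : ∀ p : P,
      (Finset.univ.filter (fun r => ι r < ι p ∧ ¬ r ≤ p)).card ≤ (ι p : ℕ) := by
    intro p
    rw [← hcount p]
    apply Finset.card_le_card
    intro r hr
    simp only [Finset.mem_filter] at hr ⊢
    exact ⟨hr.1, hr.2.1⟩
  have hq0 : (Finset.univ.filter (fun r => ι r < ι q0 ∧ ¬ r ≤ q0)).card < (ι q0 : ℕ) := by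
    rw [← hcount q0]
    apply Finset.card_lt_card
    rw [Finset.ssubset_def]
    constructor
    · intro r hr
      simp only [Finset.mem_filter] at hr ⊢
      exact ⟨hr.1, hr.2.1⟩
    · intro hsup
      have hmem : p0 ∈ Finset.univ.filter (fun r => ι r < ι q0) := by
        simp [ιmono hlt0]
      have := hsup hmem
      simp only [Finset.mem_filter] at this
      exact this.2.2 hle0
  have hsum_idx : ∑ p : P, (ι p : ℕ) = k.choose 2 := by
    have h1 : ∑ p : P, (ι p : ℕ) = ∑ j : Fin k, (j : ℕ) :=
      Fintype.sum_bijective ι hbij _ _ (fun p => rfl)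
    rw [h1, Fin.sum_univ_eq_sum_range (fun i => i) k, Finset.sum_range_id,
      Nat.choose_two_right]
  have hsum : ∑ p : P, s p < (k + 1).choose 2 := by
    have h1 : ∑ p : P, s p
        = (∑ p : P, (Finset.univ.filter (fun r => ι r < ι p ∧ ¬ r ≤ p)).card) + k := by
      simp only [hs, Finset.sum_add_distrib, Finset.sum_const, Finset.card_univ, hk, smul_eq_mul,
        mul_one]
    have h2 : (∑ p : P, (Finset.univ.filter (fun r => ι r < ι p ∧ ¬ r ≤ p)).card)
        < ∑ p : P, (ι p : ℕ) :=
      Finset.sum_lt_sum (fun p _ => hs_le p) ⟨q0, Finset.mem_univ _, hq0⟩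
    have h3 : (k + 1).choose 2 = k + k.choose 2 := by
      rw [Nat.choose_succ_succ, Nat.choose_one_right]
    omega
  refine ⟨⟨Σₗ p : P, Fin (s p)⟩, ?_, ?_⟩
  · rw [Fintype.card_lex, Fintype.card_sigma]
    simpa using hsum
  · intro c hc
    set Q := Σₗ p : P, Fin (s p) with hQ
    -- greedy construction by induction
    have key : ∀ n : ℕ, ∃ g : P → Q, (∀ p, (g p).1 = p) ∧
        ∀ p q : P, (ι p : ℕ) < n → ι q < ι p → ¬ q ≤ p → c (g p) ≠ c (g q) := by
      intro n
      induction n with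
      | zero =>
          exact ⟨fun p => toLex ⟨p, ⟨0, hspos p⟩⟩, fun p => rfl,
            fun p q hp => absurd hp (Nat.not_lt_zero _)⟩
      | succ n ih =>
          obtain ⟨g, hg1, hg2⟩ := ih
          by_cases hn : ∃ p : P, (ι p : ℕ) = n
          · obtain ⟨pstar, hps⟩ := hn
            set F : Finset ℕ :=
              (Finset.univ.filter (fun r => ι r < ι pstar ∧ ¬ r ≤ pstar)).image
                (fun r => c (g r)) with hF
            have hinj : ∀ i j : Fin (s pstar), i ≠ j →
                c (toLex ⟨pstar, i⟩ : Q) ≠ c (toLex ⟨pstar, j⟩ : Q) := by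
              intro i j hij
              apply hc
              · intro hEq
                exact hij (eq_of_heq (Sigma.mk.inj_iff.mp (toLex.injective hEq)).2)
              · rcases le_total i j with hle | hle
                · exact Or.inl (Sigma.Lex.le_def.mpr (Or.inr ⟨rfl, hle⟩))
                · exact Or.inr (Sigma.Lex.le_def.mpr (Or.inr ⟨rfl, hle⟩))
            have hFcard : F.card < s pstar :=
              lt_of_le_of_lt (Finset.card_image_le) (Nat.lt_succ_self _)
            have hex : ∃ i : Fin (s pstar), c (toLex ⟨pstar, i⟩ : Q) ∉ F := by
              by_contra hcon
              push_neg at hcon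
              have hsub : Finset.univ.image (fun i : Fin (s pstar) =>
                  c (toLex ⟨pstar, i⟩ : Q)) ⊆ F := by
                intro x hx
                simp only [Finset.mem_image, Finset.mem_univ, true_and] at hx
                obtain ⟨i, hi⟩ := hx
                exact hi ▸ hcon i
              have hcard := Finset.card_le_card hsub
              have hinj' : Function.Injective (fun i : Fin (s pstar) =>
                  c (toLex ⟨pstar, i⟩ : Q)) := by
                intro i j hcij
                by_contra hne
                exact hinj i j hne hcij
              rw [Finset.card_image_of_injective _ hinj', Finset.card_univ,
                Fintype.card_fin] at hcard
              omega
            obtain ⟨istar, histar⟩ := hex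
            refine ⟨fun p => if hp : p = pstar then toLex ⟨pstar, istar⟩ else g p, ?_, ?_⟩
            · intro p
              by_cases hp : p = pstar
              · subst hp; simp only [dif_pos]; rfl
              · simp only [dif_neg hp]; exact hg1 p
            · intro p q hp hqp hql
              have hqval : (ι q : ℕ) < (ι p : ℕ) := hqp
              have hq_ne : q ≠ pstar := by
                intro hEq
                rw [hEq, hps] at hqval
                omega
              rcases Nat.lt_succ_iff_lt_or_eq.mp hp with hpn | hpn
              · have hp_ne : p ≠ pstar := by
                  intro hEq; rw [hEq, hps] at hpn; omega
                simp only [dif_neg hp_ne, dif_neg hq_ne]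
                exact hg2 p q hpn hqp hql
              · have hp_eq : p = pstar := ιinj (Fin.ext (by rw [hps]; exact hpn))
                simp only [dif_pos hp_eq, dif_neg hq_ne]
                intro hEq
                apply histar
                rw [hEq]
                refine Finset.mem_image.mpr
                  ⟨q, Finset.mem_filter.mpr ⟨Finset.mem_univ _, ?_, ?_⟩, rfl⟩
                · rw [← hp_eq]; exact hqp
                · rw [← hp_eq]; exact hql
          · refine ⟨g, hg1, ?_⟩
            intro p q hp hqp hql
            rcases Nat.lt_succ_iff_lt_or_eq.mp hp with hpn | hpn
            · exact hg2 p q hpn hqp hql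
            · exact absurd ⟨p, hpn⟩ hn
    obtain ⟨g, hg1, hg2⟩ := key k
    have horder : ∀ p p' : P, g p ≤ g p' ↔ p ≤ p' := by
      intro p p'
      constructor
      · intro hle
        rcases Sigma.Lex.le_def.mp hle with h1 | ⟨h1, _⟩
        · rw [hg1 p, hg1 p'] at h1
          exact h1.le
        · rw [hg1 p, hg1 p'] at h1
          exact h1.le
      · intro hle
        rcases eq_or_lt_of_le hle with hEq | hlt
        · subst hEq; exact le_rfl
        · exact Sigma.Lex.le_def.mpr (Or.inl (by rw [hg1 p, hg1 p']; exact hlt))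
    have ginj : Function.Injective g := by
      intro p p' hEq
      have := congrArg Sigma.fst hEq
      rwa [hg1 p, hg1 p'] at this
    refine ⟨g, ⟨ginj, horder⟩, ?_⟩
    intro p p' hEq
    simp only [Function.comp_apply] at hEq
    by_contra hne
    by_cases hcmp : p ≤ p' ∨ p' ≤ p
    · have hgne : g p ≠ g p' := fun hgEq => hne (ginj hgEq)
      have hcmp' : g p ≤ g p' ∨ g p' ≤ g p :=
        hcmp.imp (fun h => (horder p p').mpr h) (fun h => (horder p' p).mpr h)
      exact hc _ _ hgne hcmp' hEq
    · push_neg at hcmp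
      have hιne : ι p ≠ ι p' := fun hEq2 => hne (ιinj hEq2)
      rcases lt_or_gt_of_ne hιne with hlt | hlt
      · exact hg2 p' p (ι p').isLt hlt hcmp.1 hEq.symm
      · exact hg2 p p' (ι p).isLt hlt hcmp.2 hEq
end

section
/- Let P₁, P₂, Q₁, Q₂ be finite posets. If Q₁ minimally rainbow forces P₁ and Q₂ minimally rainbow forces P₂, then the linear sum Q₁^{Q₂} minimally rainbow forces the linear sum P₁^{P₂}. -/
lemma exists_bad {Q P : Type} [PartialOrder Q] [PartialOrder P]
    (h : ¬RainbowForces Q P) :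
    ∃ c : Q → ℕ, ProperColoring c ∧
      ∀ f : P → Q, IsCopy f → ¬Function.Injective (c ∘ f) := by
  unfold RainbowForces at h
  push_neg at h
  obtain ⟨c, hc, hf⟩ := h
  exact ⟨c, hc, hf⟩

/-- From minimal rainbow forcing, a proper coloring with no rainbow copy having a
strict lower bound. -/
lemma key_low (Q P : Type) [PartialOrder Q] [PartialOrder P] [Fintype Q] [Fintype P]
    (h : MinRainbowForces Q P) :
    ∃ c : Q → ℕ, ProperColoring c ∧
      ∀ g : P → Q, IsCopy g → Function.Injective (c ∘ g) →
        ∀ u : Q, (∀ b : P, u ≤ g b ∧ u ≠ g b) → False := by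
  classical
  rcases isEmpty_or_nonempty Q with hQ | hQ
  · exact ⟨fun _ => 0, fun q => isEmptyElim q, fun g _ _ u _ => isEmptyElim u⟩
  obtain ⟨m, hm⟩ := Finset.exists_minimal (s := (Finset.univ : Finset Q))
    ⟨hQ.some, Finset.mem_univ _⟩
  replace hm : ∀ x ∈ (Finset.univ : Finset Q), ¬x < m := fun x _ hx => lt_irrefl x (lt_of_lt_of_le hx (hm.2 (Finset.mem_univ x) hx.le))
  obtain ⟨c', hc', hnr⟩ := exists_bad (h.2 m)
  set N := (Finset.univ.sup c') + 1 with hN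
  have hfresh : ∀ z : {x : Q // x ≠ m}, c' z ≠ N := by
    intro z
    have : c' z ≤ Finset.univ.sup c' := Finset.le_sup (Finset.mem_univ z)
    omega
  refine ⟨fun y => if h : y = m then N else c' ⟨y, h⟩, ?_, ?_⟩
  · intro y y' hne hcmp
    show (if h : y = m then N else c' ⟨y, h⟩) ≠ (if h : y' = m then N else c' ⟨y', h⟩)
    by_cases hy : y = m
    · have hy' : y' ≠ m := fun e => hne (hy.trans e.symm)
      rw [dif_pos hy, dif_neg hy']
      exact fun e => hfresh _ e.symm
    · by_cases hy' : y' = m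
      · rw [dif_neg hy, dif_pos hy']
        exact hfresh _
      · rw [dif_neg hy, dif_neg hy']
        exact hc' ⟨y, hy⟩ ⟨y', hy'⟩ (fun e => hne (congrArg Subtype.val e))
          (hcmp.imp Subtype.mk_le_mk.mpr Subtype.mk_le_mk.mpr)
  · intro g hg hinj u hu
    by_cases hb : ∃ b : P, g b = m
    · obtain ⟨b, hbm⟩ := hb
      have h1 := (hu b).1
      have h2 := (hu b).2
      rw [hbm] at h1 h2
      exact hm u (Finset.mem_univ u) (lt_of_le_of_ne h1 h2)
    · push_neg at hb
      refine hnr (fun b => ⟨g b, hb b⟩) ⟨?_, ?_⟩ ?_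
      · intro b b' e
        exact hg.1 (congrArg Subtype.val e)
      · intro b b'
        rw [Subtype.mk_le_mk]
        exact hg.2 b b'
      · intro b b' e
        apply hinj
        show (if h : g b = m then N else c' ⟨g b, h⟩)
          = (if h : g b' = m then N else c' ⟨g b', h⟩)
        rw [dif_neg (hb b), dif_neg (hb b')]
        exact e

/-- From minimal rainbow forcing, a proper coloring with no rainbow copy having a
strict upper bound. -/
lemma key_high (Q P : Type) [PartialOrder Q] [PartialOrder P] [Fintype Q] [Fintype P]
    (h : MinRainbowForces Q P) :
    ∃ c : Q → ℕ, ProperColoring c ∧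
      ∀ g : P → Q, IsCopy g → Function.Injective (c ∘ g) →
        ∀ u : Q, (∀ b : P, g b ≤ u ∧ g b ≠ u) → False := by
  classical
  rcases isEmpty_or_nonempty Q with hQ | hQ
  · exact ⟨fun _ => 0, fun q => isEmptyElim q, fun g _ _ u _ => isEmptyElim u⟩
  obtain ⟨m, hm⟩ := Finset.exists_maximal (s := (Finset.univ : Finset Q))
    ⟨hQ.some, Finset.mem_univ _⟩
  replace hm : ∀ x ∈ (Finset.univ : Finset Q), ¬m < x := fun x _ hx => lt_irrefl x (lt_of_le_of_lt (hm.2 (Finset.mem_univ x) hx.le) hx)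
  obtain ⟨c', hc', hnr⟩ := exists_bad (h.2 m)
  set N := (Finset.univ.sup c') + 1 with hN
  have hfresh : ∀ z : {x : Q // x ≠ m}, c' z ≠ N := by
    intro z
    have : c' z ≤ Finset.univ.sup c' := Finset.le_sup (Finset.mem_univ z)
    omega
  refine ⟨fun y => if h : y = m then N else c' ⟨y, h⟩, ?_, ?_⟩
  · intro y y' hne hcmp
    show (if h : y = m then N else c' ⟨y, h⟩) ≠ (if h : y' = m then N else c' ⟨y', h⟩)
    by_cases hy : y = m
    · have hy' : y' ≠ m := fun e => hne (hy.trans e.symm)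
      rw [dif_pos hy, dif_neg hy']
      exact fun e => hfresh _ e.symm
    · by_cases hy' : y' = m
      · rw [dif_neg hy, dif_pos hy']
        exact hfresh _
      · rw [dif_neg hy, dif_neg hy']
        exact hc' ⟨y, hy⟩ ⟨y', hy'⟩ (fun e => hne (congrArg Subtype.val e))
          (hcmp.imp Subtype.mk_le_mk.mpr Subtype.mk_le_mk.mpr)
  · intro g hg hinj u hu
    by_cases hb : ∃ b : P, g b = m
    · obtain ⟨b, hbm⟩ := hb
      have h1 := (hu b).1
      have h2 := (hu b).2
      rw [hbm] at h1 h2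
      exact hm u (Finset.mem_univ u) (lt_of_le_of_ne h1 h2)
    · push_neg at hb
      refine hnr (fun b => ⟨g b, hb b⟩) ⟨?_, ?_⟩ ?_
      · intro b b' e
        exact hg.1 (congrArg Subtype.val e)
      · intro b b'
        rw [Subtype.mk_le_mk]
        exact hg.2 b b'
      · intro b b' e
        apply hinj
        show (if h : g b = m then N else c' ⟨g b, h⟩)
          = (if h : g b' = m then N else c' ⟨g b', h⟩)
        rw [dif_neg (hb b), dif_neg (hb b')]
        exact e

/-- If `Q₁` minimally rainbow forces `P₁` and `Q₂` minimally rainbow forces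
`P₂`, then the linear sum `Q₁^{Q₂}` minimally rainbow forces the linear sum `P₁^{P₂}`. -/
theorem statement6 (Q₁ Q₂ P₁ P₂ : Type)
    [PartialOrder Q₁] [PartialOrder Q₂] [PartialOrder P₁] [PartialOrder P₂]
    [Fintype Q₁] [Fintype Q₂] [Fintype P₁] [Fintype P₂]
    (h1 : MinRainbowForces Q₁ P₁) (h2 : MinRainbowForces Q₂ P₂) :
    MinRainbowForces (Q₁ ⊕ₗ Q₂) (P₁ ⊕ₗ P₂) := by
  classical
  constructor
  · -- forcing
    intro c hc
    obtain ⟨f₁, hf₁, hr₁⟩ := h1.1 (fun x => c (toLex (Sum.inl x))) (by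
      intro x x' hne hcmp
      refine hc _ _ (fun e => hne ?_) ?_
      · exact Sum.inl_injective (toLex.injective e)
      · exact hcmp.imp Sum.Lex.inl_le_inl_iff.mpr Sum.Lex.inl_le_inl_iff.mpr)
    obtain ⟨f₂, hf₂, hr₂⟩ := h2.1 (fun y => c (toLex (Sum.inr y))) (by
      intro y y' hne hcmp
      refine hc _ _ (fun e => hne ?_) ?_
      · exact Sum.inr_injective (toLex.injective e)
      · exact hcmp.imp Sum.Lex.inr_le_inr_iff.mpr Sum.Lex.inr_le_inr_iff.mpr)
    refine ⟨fun p => toLex (Sum.map f₁ f₂ (ofLex p)), ⟨?_, ?_⟩, ?_⟩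
    · intro p p' e
      rcases p with a | b <;> rcases p' with a' | b'
      · exact congrArg (fun x => toLex (Sum.inl x))
          (hf₁.1 (Sum.inl_injective (show Sum.inl (f₁ a) = Sum.inl (f₁ a') from
            toLex.injective e)))
      · exact absurd (show Sum.inl (f₁ a) = Sum.inr (f₂ b') from toLex.injective e)
          (by simp)
      · exact absurd (show Sum.inr (f₂ b) = Sum.inl (f₁ a') from toLex.injective e)
          (by simp)
      · exact congrArg (fun x => toLex (Sum.inr x))
          (hf₂.1 (Sum.inr_injective (show Sum.inr (f₂ b) = Sum.inr (f₂ b') from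
            toLex.injective e)))
    · intro p p'
      rcases p with a | b <;> rcases p' with a' | b'
      · show toLex (Sum.inl (f₁ a)) ≤ toLex (Sum.inl (f₁ a')) ↔
          toLex (Sum.inl a : P₁ ⊕ P₂) ≤ toLex (Sum.inl a')
        rw [Sum.Lex.inl_le_inl_iff, Sum.Lex.inl_le_inl_iff]
        exact hf₁.2 a a'
      · exact iff_of_true (Sum.Lex.inl_le_inr _ _) (Sum.Lex.inl_le_inr _ _)
      · exact iff_of_false Sum.Lex.not_inr_le_inl Sum.Lex.not_inr_le_inl
      · show toLex (Sum.inr (f₂ b)) ≤ toLex (Sum.inr (f₂ b')) ↔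
          toLex (Sum.inr b : P₁ ⊕ P₂) ≤ toLex (Sum.inr b')
        rw [Sum.Lex.inr_le_inr_iff, Sum.Lex.inr_le_inr_iff]
        exact hf₂.2 b b'
    · intro p p' e
      rcases p with a | b <;> rcases p' with a' | b'
      · exact congrArg (fun x => toLex (Sum.inl x)) (hr₁ e)
      · exact absurd e (hc (toLex (Sum.inl (f₁ a))) (toLex (Sum.inr (f₂ b')))
          (fun h => by simpa using toLex.injective h)
          (Or.inl (Sum.Lex.inl_le_inr _ _)))
      · exact absurd e (hc (toLex (Sum.inr (f₂ b))) (toLex (Sum.inl (f₁ a')))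
          (fun h => by simpa using toLex.injective h)
          (Or.inr (Sum.Lex.inl_le_inr _ _)))
      · exact congrArg (fun x => toLex (Sum.inr x)) (hr₂ e)
  · -- minimality
    intro q hforce
    rcases q with q₀ | q₀
    · -- q = toLex (inl q₀)
      obtain ⟨c₁', hc₁', hnr₁⟩ := exists_bad (h1.2 q₀)
      obtain ⟨c₂, hc₂, hK⟩ := key_low Q₂ P₂ h2
      -- total extension of c₁'
      set c₁t : Q₁ → ℕ := fun a => if h : a = q₀ then 0 else c₁' ⟨a, h⟩ with hc₁t
      set c : {x : Q₁ ⊕ₗ Q₂ // x ≠ toLex (Sum.inl q₀)} → ℕ :=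
        fun x => Sum.elim (fun a => 2 * c₁t a) (fun b => 2 * c₂ b + 1) (ofLex x.val) with hcdef
      have hproper : ProperColoring c := by
        rintro ⟨x, hx⟩ ⟨x', hx'⟩ hne hcmp
        have hne' : x ≠ x' := fun e => hne (Subtype.ext e)
        have hcmp' : x ≤ x' ∨ x' ≤ x := hcmp
        rcases x with a | b <;> rcases x' with a' | b'
        · have ha : a ≠ q₀ := fun e => hx (by subst e; rfl)
          have ha' : a' ≠ q₀ := fun e => hx' (by subst e; rfl)
          have key : c₁' ⟨a, ha⟩ ≠ c₁' ⟨a', ha'⟩ := by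
            refine hc₁' _ _ (fun e => hne' ?_) ?_
            · exact congrArg (fun z => toLex (Sum.inl z)) (congrArg Subtype.val e)
            · rcases hcmp' with h | h
              · exact Or.inl (Subtype.mk_le_mk.mpr (Sum.Lex.inl_le_inl_iff.mp h))
              · exact Or.inr (Subtype.mk_le_mk.mpr (Sum.Lex.inl_le_inl_iff.mp h))
          show 2 * c₁t a ≠ 2 * c₁t a'
          simp only [hc₁t]
          rw [dif_neg ha, dif_neg ha']
          omega
        · show 2 * c₁t a ≠ 2 * c₂ b' + 1
          omega
        · show 2 * c₂ b + 1 ≠ 2 * c₁t a'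
          omega
        · have key : c₂ b ≠ c₂ b' := by
            refine hc₂ _ _ (fun e => hne' (by subst e; rfl)) ?_
            exact hcmp'.imp Sum.Lex.inr_le_inr_iff.mp Sum.Lex.inr_le_inr_iff.mp
          show 2 * c₂ b + 1 ≠ 2 * c₂ b' + 1
          omega
      obtain ⟨f, hf, hrf⟩ := hforce c hproper
      by_cases hall : ∀ a : P₁, ∃ x : Q₁,
          (f (toLex (Sum.inl a))).val = toLex (Sum.inl x)
      · -- all of P₁ lands in Q₁ \ {q₀} : contradiction with c₁'
        choose v hv using hall
        have hvne : ∀ a : P₁, v a ≠ q₀ := by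
          intro a e
          exact (f (toLex (Sum.inl a))).2 (by rw [hv a, e]; try rfl)
        refine hnr₁ (fun a => ⟨v a, hvne a⟩) ⟨?_, ?_⟩ ?_
        · intro a a' e
          have : (f (toLex (Sum.inl a))).val = (f (toLex (Sum.inl a'))).val := by
            rw [hv a, hv a']
            exact congrArg (fun z => toLex (Sum.inl z)) (congrArg Subtype.val e)
          have := hf.1 (Subtype.ext this)
          exact Sum.inl_injective (toLex.injective this)
        · intro a a'
          rw [Subtype.mk_le_mk, ← Sum.Lex.inl_le_inl_iff (α := Q₁) (β := Q₂),
            ← hv a, ← hv a']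
          rw [show ((f (toLex (Sum.inl a))).val ≤ (f (toLex (Sum.inl a'))).val)
              = (f (toLex (Sum.inl a)) ≤ f (toLex (Sum.inl a'))) from rfl]
          rw [hf.2]
          exact Sum.Lex.inl_le_inl_iff
        · intro a a' e
          have hcc : ∀ a : P₁, c (f (toLex (Sum.inl a))) = 2 * c₁' ⟨v a, hvne a⟩ := by
            intro a
            show Sum.elim (fun a => 2 * c₁t a) (fun b => 2 * c₂ b + 1)
              (ofLex (f (toLex (Sum.inl a))).val) = _
            rw [hv a]
            simp only [ofLex_toLex, Sum.elim_inl, hc₁t]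
            rw [dif_neg (hvne a)]
          have heq : c (f (toLex (Sum.inl a))) = c (f (toLex (Sum.inl a'))) := by
            rw [hcc a, hcc a']
            exact congrArg (fun t => 2 * t) e
          exact Sum.inl_injective (toLex.injective (hrf heq))
      · push_neg at hall
        obtain ⟨a₀, ha₀⟩ := hall
        obtain ⟨u, hu⟩ : ∃ u : Q₂, (f (toLex (Sum.inl a₀))).val = toLex (Sum.inr u) := by
          rcases h' : ofLex (f (toLex (Sum.inl a₀))).val with x | u
          · exact absurd h' (ha₀ x)
          · exact ⟨u, h'⟩
        have hallb : ∀ b : P₂, ∃ w : Q₂,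
            (f (toLex (Sum.inr b))).val = toLex (Sum.inr w) := by
          intro b
          rcases h' : ofLex (f (toLex (Sum.inr b))).val with w | w
          · exfalso
            have hle : f (toLex (Sum.inl a₀)) ≤ f (toLex (Sum.inr b)) :=
              (hf.2 _ _).mpr (Sum.Lex.inl_le_inr _ _)
            have hlev : (f (toLex (Sum.inl a₀))).val ≤ (f (toLex (Sum.inr b))).val := hle
            rw [hu, show (f (toLex (Sum.inr b))).val = toLex (Sum.inl w) from h'] at hlev
            exact Sum.Lex.not_inr_le_inl hlev
          · exact ⟨w, h'⟩
        choose w hw using hallb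
        refine hK w ⟨?_, ?_⟩ ?_ u ?_
        · intro b b' e
          have : (f (toLex (Sum.inr b))).val = (f (toLex (Sum.inr b'))).val := by
            rw [hw b, hw b', e]
          have := hf.1 (Subtype.ext this)
          exact Sum.inr_injective (toLex.injective this)
        · intro b b'
          rw [← Sum.Lex.inr_le_inr_iff (α := Q₁) (β := Q₂), ← hw b, ← hw b']
          rw [show ((f (toLex (Sum.inr b))).val ≤ (f (toLex (Sum.inr b'))).val)
              = (f (toLex (Sum.inr b)) ≤ f (toLex (Sum.inr b'))) from rfl]
          rw [hf.2]
          exact Sum.Lex.inr_le_inr_iff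
        · intro b b' e
          have hcc : ∀ b : P₂, c (f (toLex (Sum.inr b))) = 2 * c₂ (w b) + 1 := by
            intro b
            show Sum.elim (fun a => 2 * c₁t a) (fun b => 2 * c₂ b + 1)
              (ofLex (f (toLex (Sum.inr b))).val) = _
            rw [hw b]
            simp only [ofLex_toLex, Sum.elim_inr]
          have heq : c (f (toLex (Sum.inr b))) = c (f (toLex (Sum.inr b'))) := by
            rw [hcc b, hcc b']
            have e' : c₂ (w b) = c₂ (w b') := e
            omega
          exact Sum.inr_injective (toLex.injective (hrf heq))
        · intro b
          constructor
          · have hle : f (toLex (Sum.inl a₀)) ≤ f (toLex (Sum.inr b)) :=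
              (hf.2 _ _).mpr (Sum.Lex.inl_le_inr _ _)
            have : (f (toLex (Sum.inl a₀))).val ≤ (f (toLex (Sum.inr b))).val := hle
            rw [hu, hw b] at this
            exact Sum.Lex.inr_le_inr_iff.mp this
          · intro e
            have : (f (toLex (Sum.inl a₀))).val = (f (toLex (Sum.inr b))).val := by
              rw [hu, hw b, e]
            have h2 := hf.1 (Subtype.ext this)
            exact absurd (toLex.injective h2) (by simp)
    · -- q = toLex (inr q₀)
      obtain ⟨c₂', hc₂', hnr₂⟩ := exists_bad (h2.2 q₀)
      obtain ⟨c₁, hc₁, hK⟩ := key_high Q₁ P₁ h1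
      set c₂t : Q₂ → ℕ := fun b => if h : b = q₀ then 0 else c₂' ⟨b, h⟩ with hc₂t
      set c : {x : Q₁ ⊕ₗ Q₂ // x ≠ toLex (Sum.inr q₀)} → ℕ :=
        fun x => Sum.elim (fun a => 2 * c₁ a) (fun b => 2 * c₂t b + 1) (ofLex x.val) with hcdef
      have hproper : ProperColoring c := by
        rintro ⟨x, hx⟩ ⟨x', hx'⟩ hne hcmp
        have hne' : x ≠ x' := fun e => hne (Subtype.ext e)
        have hcmp' : x ≤ x' ∨ x' ≤ x := hcmp
        rcases x with a | b <;> rcases x' with a' | b'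
        · have key : c₁ a ≠ c₁ a' := by
            refine hc₁ _ _ (fun e => hne' (by subst e; rfl)) ?_
            exact hcmp'.imp Sum.Lex.inl_le_inl_iff.mp Sum.Lex.inl_le_inl_iff.mp
          show 2 * c₁ a ≠ 2 * c₁ a'
          omega
        · show 2 * c₁ a ≠ 2 * c₂t b' + 1
          omega
        · show 2 * c₂t b + 1 ≠ 2 * c₁ a'
          omega
        · have hb : b ≠ q₀ := fun e => hx (by subst e; rfl)
          have hb' : b' ≠ q₀ := fun e => hx' (by subst e; rfl)
          have key : c₂' ⟨b, hb⟩ ≠ c₂' ⟨b', hb'⟩ := by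
            refine hc₂' _ _ (fun e => hne' ?_) ?_
            · exact congrArg (fun z => toLex (Sum.inr z)) (congrArg Subtype.val e)
            · rcases hcmp' with h | h
              · exact Or.inl (Subtype.mk_le_mk.mpr (Sum.Lex.inr_le_inr_iff.mp h))
              · exact Or.inr (Subtype.mk_le_mk.mpr (Sum.Lex.inr_le_inr_iff.mp h))
          show 2 * c₂t b + 1 ≠ 2 * c₂t b' + 1
          simp only [hc₂t]
          rw [dif_neg hb, dif_neg hb']
          omega
      obtain ⟨f, hf, hrf⟩ := hforce c hproper
      by_cases hall : ∀ b : P₂, ∃ y : Q₂,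
          (f (toLex (Sum.inr b))).val = toLex (Sum.inr y)
      · choose v hv using hall
        have hvne : ∀ b : P₂, v b ≠ q₀ := by
          intro b e
          exact (f (toLex (Sum.inr b))).2 (by rw [hv b, e]; try rfl)
        refine hnr₂ (fun b => ⟨v b, hvne b⟩) ⟨?_, ?_⟩ ?_
        · intro b b' e
          have : (f (toLex (Sum.inr b))).val = (f (toLex (Sum.inr b'))).val := by
            rw [hv b, hv b']
            exact congrArg (fun z => toLex (Sum.inr z)) (congrArg Subtype.val e)
          have := hf.1 (Subtype.ext this)
          exact Sum.inr_injective (toLex.injective this)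
        · intro b b'
          rw [Subtype.mk_le_mk, ← Sum.Lex.inr_le_inr_iff (α := Q₁) (β := Q₂),
            ← hv b, ← hv b']
          rw [show ((f (toLex (Sum.inr b))).val ≤ (f (toLex (Sum.inr b'))).val)
              = (f (toLex (Sum.inr b)) ≤ f (toLex (Sum.inr b'))) from rfl]
          rw [hf.2]
          exact Sum.Lex.inr_le_inr_iff
        · intro b b' e
          have hcc : ∀ b : P₂, c (f (toLex (Sum.inr b))) = 2 * c₂' ⟨v b, hvne b⟩ + 1 := by
            intro b
            show Sum.elim (fun a => 2 * c₁ a) (fun b => 2 * c₂t b + 1)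
              (ofLex (f (toLex (Sum.inr b))).val) = _
            rw [hv b]
            simp only [ofLex_toLex, Sum.elim_inr, hc₂t]
            rw [dif_neg (hvne b)]
          have heq : c (f (toLex (Sum.inr b))) = c (f (toLex (Sum.inr b'))) := by
            rw [hcc b, hcc b']
            have e' : c₂' ⟨v b, hvne b⟩ = c₂' ⟨v b', hvne b'⟩ := e
            omega
          exact Sum.inr_injective (toLex.injective (hrf heq))
      · push_neg at hall
        obtain ⟨b₀, hb₀⟩ := hall
        obtain ⟨u, hu⟩ : ∃ u : Q₁, (f (toLex (Sum.inr b₀))).val = toLex (Sum.inl u) := by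
          rcases h' : ofLex (f (toLex (Sum.inr b₀))).val with x | y
          · exact ⟨x, h'⟩
          · exact absurd h' (hb₀ y)
        have halla : ∀ a : P₁, ∃ w : Q₁,
            (f (toLex (Sum.inl a))).val = toLex (Sum.inl w) := by
          intro a
          rcases h' : ofLex (f (toLex (Sum.inl a))).val with w | w
          · exact ⟨w, h'⟩
          · exfalso
            have hle : f (toLex (Sum.inl a)) ≤ f (toLex (Sum.inr b₀)) :=
              (hf.2 _ _).mpr (Sum.Lex.inl_le_inr _ _)
            have hlev : (f (toLex (Sum.inl a))).val ≤ (f (toLex (Sum.inr b₀))).val := hle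
            rw [hu, show (f (toLex (Sum.inl a))).val = toLex (Sum.inr w) from h'] at hlev
            exact Sum.Lex.not_inr_le_inl hlev
        choose w hw using halla
        refine hK w ⟨?_, ?_⟩ ?_ u ?_
        · intro a a' e
          have : (f (toLex (Sum.inl a))).val = (f (toLex (Sum.inl a'))).val := by
            rw [hw a, hw a', e]
          have := hf.1 (Subtype.ext this)
          exact Sum.inl_injective (toLex.injective this)
        · intro a a'
          rw [← Sum.Lex.inl_le_inl_iff (α := Q₁) (β := Q₂), ← hw a, ← hw a']
          rw [show ((f (toLex (Sum.inl a))).val ≤ (f (toLex (Sum.inl a'))).val)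
              = (f (toLex (Sum.inl a)) ≤ f (toLex (Sum.inl a'))) from rfl]
          rw [hf.2]
          exact Sum.Lex.inl_le_inl_iff
        · intro a a' e
          have hcc : ∀ a : P₁, c (f (toLex (Sum.inl a))) = 2 * c₁ (w a) := by
            intro a
            show Sum.elim (fun a => 2 * c₁ a) (fun b => 2 * c₂t b + 1)
              (ofLex (f (toLex (Sum.inl a))).val) = _
            rw [hw a]
            simp only [ofLex_toLex, Sum.elim_inl]
          have heq : c (f (toLex (Sum.inl a))) = c (f (toLex (Sum.inl a'))) := by
            rw [hcc a, hcc a']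
            have e' : c₁ (w a) = c₁ (w a') := e
            omega
          exact Sum.inl_injective (toLex.injective (hrf heq))
        · intro a
          constructor
          · have hle : f (toLex (Sum.inl a)) ≤ f (toLex (Sum.inr b₀)) :=
              (hf.2 _ _).mpr (Sum.Lex.inl_le_inr _ _)
            have : (f (toLex (Sum.inl a))).val ≤ (f (toLex (Sum.inr b₀))).val := hle
            rw [hu, hw a] at this
            exact Sum.Lex.inl_le_inl_iff.mp this
          · intro e
            have : (f (toLex (Sum.inl a))).val = (f (toLex (Sum.inr b₀))).val := by
              rw [hu, hw a, e]
            have h2 := hf.1 (Subtype.ext this)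
            exact absurd (toLex.injective h2) (by simp)
end

section
/- A finite poset Q minimally rainbow forces A_2 if and only if Q is order-isomorphic to O_2, the 3-element poset {u, v₁, v₂} with v₁ < v₂ and u incomparable to both v₁ and v₂. -/
/-- The order relation of `O₂`: `1 < 2` and `0` incomparable to both. -/
def O2rel (x y : Fin 3) : Prop := x.val = y.val ∨ (x.val = 1 ∧ y.val = 2)

instance : DecidableRel O2rel := fun x y => by unfold O2rel; infer_instance

/-- `O₂`: the 3-element poset `{u, v₁, v₂}` (`u = 0`, `v₁ = 1`, `v₂ = 2`) with `v₁ < v₂`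
and `u` incomparable to both. -/
def O2 := Fin 3

instance : DecidableEq O2 := instDecidableEqFin 3
instance : Fintype O2 := Fin.fintype 3

instance : PartialOrder O2 where
  le := O2rel
  le_refl _ := Or.inl rfl
  le_trans := by show ∀ a b c : Fin 3, O2rel a b → O2rel b c → O2rel a c; decide
  le_antisymm := by show ∀ a b : Fin 3, O2rel a b → O2rel b a → a = b; decide

------------------------------------------------------------------------
-- Auxiliary development
------------------------------------------------------------------------

instance : DecidableRel ((· ≤ ·) : O2 → O2 → Prop) :=
  fun x y => (inferInstance : DecidableRel O2rel) x y

instance : DecidableRel ((· < ·) : O2 → O2 → Prop) :=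
  fun x y => decidable_of_iff _ (lt_iff_le_not_ge).symm

/-- Incomparability. -/
def Incomp {Q : Type*} [PartialOrder Q] (x y : Q) : Prop := ¬ x ≤ y ∧ ¬ y ≤ x

def HasO2 (Q : Type*) [PartialOrder Q] : Prop :=
  ∃ a b u : Q, a < b ∧ Incomp u a ∧ Incomp u b

lemma ac2_le_iff (p p' : AC 2) : p ≤ p' ↔ p = p' := Iff.rfl

lemma ac2_cases (p : AC 2) : p = (0 : Fin 2) ∨ p = (1 : Fin 2) := by
  have : ∀ i : Fin 2, i = 0 ∨ i = 1 := by decide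
  exact this p

def pairMap {Q : Type*} (u x : Q) : Fin 2 → Q := fun i => if i = 0 then u else x

lemma pairMap_copy {Q : Type*} [PartialOrder Q] {u x : Q} (h : Incomp u x) :
    @IsCopy (AC 2) Q _ _ (pairMap u x) := by
  have hne : u ≠ x := fun e => h.1 (le_of_eq e)
  have h0 : pairMap u x (0 : Fin 2) = u := if_pos rfl
  have h1 : pairMap u x (1 : Fin 2) = x := if_neg (by decide)
  constructor
  · intro i j hij
    rcases ac2_cases i with hi | hi <;> rcases ac2_cases j with hj | hj <;>
      subst hi <;> subst hj <;> first
      | rfl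
      | (exfalso; rw [h0, h1] at hij; exact hne hij)
      | (exfalso; rw [h0, h1] at hij; exact hne hij.symm)
  · intro p p'
    rw [ac2_le_iff]
    rcases ac2_cases p with hp | hp <;> rcases ac2_cases p' with hq | hq <;>
        subst hp <;> subst hq
    · simp [h0]; exact rfl
    · rw [h0, h1]
      exact ⟨fun hle => absurd hle h.1,
        fun e => absurd e (by decide : ¬ ((0 : Fin 2) = (1 : Fin 2)))⟩
    · rw [h0, h1]
      exact ⟨fun hle => absurd hle h.2,
        fun e => absurd e (by decide : ¬ ((1 : Fin 2) = (0 : Fin 2)))⟩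
    · simp [h1]; exact rfl

lemma forces_of_hasO2 {Q : Type*} [PartialOrder Q] (h : HasO2 Q) :
    RainbowForces Q (AC 2) := by
  obtain ⟨a, b, u, hab, hua, hub⟩ := h
  intro c hc
  have hcab : c a ≠ c b := hc a b (ne_of_lt hab) (Or.inl hab.le)
  obtain ⟨x, hx, hcx⟩ : ∃ x, Incomp u x ∧ c u ≠ c x := by
    by_cases h' : c u = c a
    · exact ⟨b, hub, by rw [h']; exact hcab⟩
    · exact ⟨a, hua, h'⟩
  refine ⟨pairMap u x, pairMap_copy hx, ?_⟩
  intro i j hij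
  have h0 : pairMap u x (0 : Fin 2) = u := if_pos rfl
  have h1 : pairMap u x (1 : Fin 2) = x := if_neg (by decide)
  rcases ac2_cases i with hi | hi <;> rcases ac2_cases j with hj | hj <;>
      subst hi <;> subst hj <;> first
    | rfl
    | (exfalso; change c (pairMap u x _) = c (pairMap u x _) at hij; rw [h0, h1] at hij; exact hcx hij)
    | (exfalso; change c (pairMap u x _) = c (pairMap u x _) at hij; rw [h0, h1] at hij; exact hcx hij.symm)

lemma not_forces_of_not_hasO2 {Q : Type*} [PartialOrder Q] [Fintype Q]
    (hn : ¬ HasO2 Q) : ¬ RainbowForces Q (AC 2) := by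
  classical
  -- the relation "equal or incomparable" is an equivalence relation
  set R : Q → Q → Prop := fun x y => x = y ∨ Incomp x y with hR
  have hsymm : ∀ {x y}, R x y → R y x := by
    rintro x y (rfl | h)
    · exact Or.inl rfl
    · exact Or.inr ⟨h.2, h.1⟩
  have htrans : ∀ {x y z}, R x y → R y z → R x z := by
    rintro x y z (rfl | hxy) hyz
    · exact hyz
    rcases hyz with rfl | hyz
    · exact Or.inr hxy
    by_cases hxz : x = z
    · exact Or.inl hxz
    by_cases hle : x ≤ z
    · exact absurd ⟨lt_of_le_of_ne hle hxz, ⟨hxy.2, hxy.1⟩, ⟨hyz.1, hyz.2⟩⟩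
        (fun h => hn ⟨x, z, y, h⟩)
    by_cases hge : z ≤ x
    · exact absurd ⟨lt_of_le_of_ne hge (Ne.symm hxz), ⟨hyz.1, hyz.2⟩, ⟨hxy.2, hxy.1⟩⟩
        (fun h => hn ⟨z, x, y, h⟩)
    · exact Or.inr ⟨hle, hge⟩
  set g : Q → ℕ := fun x => ((Fintype.equivFin Q) x : ℕ) with hg
  have hginj : Function.Injective g := by
    intro x y hxy
    exact (Fintype.equivFin Q).injective (Fin.val_injective hxy)
  set S : Q → Finset Q := fun x => Finset.univ.filter (fun y => R x y) with hS
  have hmemS : ∀ x, x ∈ S x := fun x => Finset.mem_filter.2 ⟨Finset.mem_univ x, Or.inl rfl⟩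
  have hSne : ∀ x, ((S x).image g).Nonempty :=
    fun x => ⟨g x, Finset.mem_image_of_mem g (hmemS x)⟩
  set c : Q → ℕ := fun x => ((S x).image g).min' (hSne x) with hc
  have hSeq : ∀ {x y}, R x y → S x = S y := by
    intro x y hxy
    ext z
    simp only [hS, Finset.mem_filter, Finset.mem_univ, true_and]
    exact ⟨fun h => htrans (hsymm hxy) h, fun h => htrans hxy h⟩
  have hceq : ∀ {x y}, R x y → c x = c y := by
    intro x y hxy
    simp only [hc]
    congr 1
    rw [hSeq hxy]
  have hproper : ProperColoring c := by
    intro q q' hne hcomp heq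
    obtain ⟨w, hw, hgw⟩ := Finset.mem_image.1 (((S q).image g).min'_mem (hSne q))
    obtain ⟨w', hw', hgw'⟩ := Finset.mem_image.1 (((S q').image g).min'_mem (hSne q'))
    have : g w = g w' := by rw [hgw, hgw']; exact heq
    have hww : w = w' := hginj this
    subst hww
    have h1 : R q w := (Finset.mem_filter.1 hw).2
    have h2 : R q' w := (Finset.mem_filter.1 hw').2
    have h3 : R q q' := htrans h1 (hsymm h2)
    rcases h3 with rfl | h3
    · exact hne rfl
    · rcases hcomp with h | h
      · exact h3.1 h
      · exact h3.2 h
  intro hforce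
  obtain ⟨f, ⟨hfinj, hford⟩, hcf⟩ := hforce c hproper
  have hne01 : ((0 : Fin 2) : AC 2) ≠ ((1 : Fin 2) : AC 2) := by
    intro h
    exact absurd h (by decide : ¬ ((0 : Fin 2) = 1))
  have hfne : f (0 : Fin 2) ≠ f (1 : Fin 2) := fun h => hne01 (hfinj h)
  have hinc : Incomp (f (0 : Fin 2)) (f (1 : Fin 2)) := by
    constructor
    · intro hle
      have := (hford _ _).1 hle
      exact hne01 this
    · intro hle
      have := (hford _ _).1 hle
      exact hne01 this.symm
  have : c (f (0 : Fin 2)) = c (f (1 : Fin 2)) := hceq (Or.inr hinc)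
  exact hne01 (hcf this)

lemma forces_iff_hasO2 {Q : Type*} [PartialOrder Q] [Fintype Q] :
    RainbowForces Q (AC 2) ↔ HasO2 Q := by
  constructor
  · intro h
    by_contra hn
    exact not_forces_of_not_hasO2 hn h
  · exact forces_of_hasO2

def o0 : O2 := (0 : Fin 3)
def o1 : O2 := (1 : Fin 3)
def o2 : O2 := (2 : Fin 3)

lemma o2_classify : ∀ a b u : O2, a < b → (¬ u ≤ a ∧ ¬ a ≤ u) → (¬ u ≤ b ∧ ¬ b ≤ u) →
    a = (1 : Fin 3) ∧ b = (2 : Fin 3) ∧ u = (0 : Fin 3) := by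
  show ∀ a b u : O2, a < b → (¬ u ≤ a ∧ ¬ a ≤ u) → (¬ u ≤ b ∧ ¬ b ≤ u) → a = o1 ∧ b = o2 ∧ u = o0
  decide



lemma o2_le_facts : o1 ≤ o2 ∧ ¬ o2 ≤ o1 ∧ ¬ o0 ≤ o1 ∧ ¬ o1 ≤ o0 ∧
    ¬ o0 ≤ o2 ∧ ¬ o2 ≤ o0 := by
  decide

lemma hasO2_of_iso {Q P : Type*} [PartialOrder Q] [PartialOrder P] (e : Q ≃o P)
    (h : HasO2 Q) : HasO2 P := by
  obtain ⟨a, b, u, hab, hua, hub⟩ := h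
  refine ⟨e a, e b, e u, ?_, ⟨?_, ?_⟩, ⟨?_, ?_⟩⟩
  · exact e.strictMono hab
  · rw [e.le_iff_le]; exact hua.1
  · rw [e.le_iff_le]; exact hua.2
  · rw [e.le_iff_le]; exact hub.1
  · rw [e.le_iff_le]; exact hub.2

lemma hasO2_O2 : HasO2 O2 := by
  obtain ⟨h12, h21, h01, h10, h02, h20⟩ := o2_le_facts
  exact ⟨o1, o2, o0, lt_of_le_not_ge h12 h21, ⟨h01, h10⟩, ⟨h02, h20⟩⟩


/-- A finite poset `Q` minimally rainbow forces `A_2` if and only if `Q` is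
order-isomorphic to `O₂`. -/
theorem statement7 (Q : Type) [PartialOrder Q] [Fintype Q] :
    MinRainbowForces Q (AC 2) ↔ Nonempty (Q ≃o O2) := by
  classical
  constructor
  · rintro ⟨hforce, hmin⟩
    obtain ⟨a, b, u, hab, hua, hub⟩ := forces_iff_hasO2.1 hforce
    have hcover : ∀ x : Q, x = a ∨ x = b ∨ x = u := by
      intro x
      by_contra hx
      push_neg at hx
      obtain ⟨hxa, hxb, hxu⟩ := hx
      apply hmin x
      apply forces_of_hasO2
      refine ⟨⟨a, (Ne.symm hxa)⟩, ⟨b, (Ne.symm hxb)⟩, ⟨u, (Ne.symm hxu)⟩, ?_, ⟨?_, ?_⟩, ⟨?_, ?_⟩⟩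
      · exact Subtype.mk_lt_mk.2 hab
      · exact fun h => hua.1 (Subtype.mk_le_mk.1 h)
      · exact fun h => hua.2 (Subtype.mk_le_mk.1 h)
      · exact fun h => hub.1 (Subtype.mk_le_mk.1 h)
      · exact fun h => hub.2 (Subtype.mk_le_mk.1 h)
    have hne_ab : a ≠ b := ne_of_lt hab
    have hne_ua : u ≠ a := fun h => hua.1 (le_of_eq h)
    have hne_ub : u ≠ b := fun h => hub.1 (le_of_eq h)
    have hnba : ¬ b ≤ a := fun h => absurd (le_antisymm hab.le h) hne_ab
    obtain ⟨h12, h21, h01, h10, h02, h20⟩ := o2_le_facts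
    have e10 : ¬ ((1 : Fin 3) = 0) := by decide
    have e20 : ¬ ((2 : Fin 3) = 0) := by decide
    have e21 : ¬ ((2 : Fin 3) = 1) := by decide
    -- build the order isomorphism
    refine ⟨{ toFun := fun x => if x = u then (0 : Fin 3) else if x = a then (1 : Fin 3)
                else (2 : Fin 3),
              invFun := fun i => if i = (0 : Fin 3) then u else if i = (1 : Fin 3) then a else b,
              left_inv := ?_, right_inv := ?_, map_rel_iff' := ?_ }⟩
    · intro x
      rcases hcover x with rfl | rfl | rfl
      · beta_reduce
        erw [if_neg hne_ua.symm, if_pos rfl, if_neg e10, if_pos rfl]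
      · beta_reduce
        erw [if_neg hne_ub.symm, if_neg hne_ab.symm, if_neg e20, if_neg e21]
      · beta_reduce
        erw [if_pos rfl, if_pos rfl]
    · intro i
      have hi : i = (0 : Fin 3) ∨ i = (1 : Fin 3) ∨ i = (2 : Fin 3) := by
        have : ∀ j : Fin 3, j = 0 ∨ j = 1 ∨ j = 2 := by decide
        exact this i
      rcases hi with rfl | rfl | rfl
      · beta_reduce
        erw [if_pos rfl, if_pos rfl]
      · beta_reduce
        change (if (@ite Q ((1 : Fin 3) = 0) (Classical.propDecidable _) u (@ite Q ((1 : Fin 3) = 1) (Classical.propDecidable _) a b)) = u then (0 : Fin 3) else if (@ite Q ((1 : Fin 3) = 0) (Classical.propDecidable _) u (@ite Q ((1 : Fin 3) = 1) (Classical.propDecidable _) a b)) = a then (1 : Fin 3) else 2) = (1 : Fin 3)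
        rw [if_neg e10, if_pos rfl, if_neg hne_ua.symm, if_pos rfl]
      · beta_reduce
        change (if (@ite Q ((2 : Fin 3) = 0) (Classical.propDecidable _) u (@ite Q ((2 : Fin 3) = 1) (Classical.propDecidable _) a b)) = u then (0 : Fin 3) else if (@ite Q ((2 : Fin 3) = 0) (Classical.propDecidable _) u (@ite Q ((2 : Fin 3) = 1) (Classical.propDecidable _) a b)) = a then (1 : Fin 3) else 2) = (2 : Fin 3)
        rw [if_neg e20, if_neg e21, if_neg hne_ub.symm, if_neg hne_ab.symm]
    · intro x y
      simp only [Equiv.coe_fn_mk]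
      rcases hcover x with rfl | rfl | rfl <;> rcases hcover y with rfl | rfl | rfl
      · erw [if_neg hne_ua.symm, if_pos rfl]; simp; exact le_rfl
      · erw [if_neg hne_ua.symm, if_pos rfl, if_neg hne_ub.symm, if_neg hne_ab.symm]
        exact ⟨fun _ => hab.le, fun _ => h12⟩
      · erw [if_neg hne_ua.symm, if_pos rfl, if_pos rfl]
        exact ⟨fun h => absurd h h10, fun h => absurd h hua.2⟩
      · erw [if_neg hne_ub.symm, if_neg hne_ab.symm, if_neg hne_ua.symm, if_pos rfl]
        exact ⟨fun h => absurd h h21, fun h => absurd h hnba⟩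
      · erw [if_neg hne_ub.symm, if_neg hne_ab.symm]; simp; exact le_rfl
      · erw [if_neg hne_ub.symm, if_neg hne_ab.symm, if_pos rfl]
        exact ⟨fun h => absurd h h20, fun h => absurd h hub.2⟩
      · erw [if_pos rfl, if_neg hne_ua.symm, if_pos rfl]
        exact ⟨fun h => absurd h h01, fun h => absurd h hua.1⟩
      · erw [if_pos rfl, if_neg hne_ub.symm, if_neg hne_ab.symm]
        exact ⟨fun h => absurd h h02, fun h => absurd h hub.1⟩
      · erw [if_pos rfl]; simp; exact le_rfl
  · rintro ⟨e⟩
    constructor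
    · exact forces_of_hasO2 (hasO2_of_iso e.symm hasO2_O2)
    · intro q
      rw [forces_iff_hasO2]
      rintro ⟨a, b, u, hab, hua, hub⟩
      have hab' : e a.1 < e b.1 := e.strictMono (Subtype.coe_lt_coe.2 hab)
      have hua1 : ¬ e u.1 ≤ e a.1 := by rw [e.le_iff_le]; exact fun h => hua.1 h
      have hua2 : ¬ e a.1 ≤ e u.1 := by rw [e.le_iff_le]; exact fun h => hua.2 h
      have hub1 : ¬ e u.1 ≤ e b.1 := by rw [e.le_iff_le]; exact fun h => hub.1 h
      have hub2 : ¬ e b.1 ≤ e u.1 := by rw [e.le_iff_le]; exact fun h => hub.2 h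
      obtain ⟨ha, hb, hu⟩ := o2_classify (e a.1) (e b.1) (e u.1) hab' ⟨hua1, hua2⟩ ⟨hub1, hub2⟩
      have hq : e q = (0 : Fin 3) ∨ e q = (1 : Fin 3) ∨ e q = (2 : Fin 3) := by
        have : ∀ j : Fin 3, j = 0 ∨ j = 1 ∨ j = 2 := by decide
        exact this (e q)
      rcases hq with h | h | h
      · exact u.2 (e.injective (hu.trans h.symm))
      · exact a.2 (e.injective (ha.trans h.symm))
      · exact b.2 (e.injective (hb.trans h.symm))
end

section
/- A finite poset Q minimally rainbow forces the poset ∨ if and only if Q is order-isomorphic to J, where ∨ is the 3-element poset {a, b, c} with a < b, a < c and b, c incomparable, and J is the 4-element poset {z, u, v₁, v₂} with z < u, z < v₁ < v₂, z < v₂, and u incomparable to v₁ and v₂. -/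
/-- The order relation of the `∨` poset: `0 < 1`, `0 < 2`, and `1, 2` incomparable. -/
def VeeRel (x y : Fin 3) : Prop := x.val = y.val ∨ (x.val = 0 ∧ y.val ≠ 0)

instance : DecidableRel VeeRel := fun x y => by unfold VeeRel; infer_instance

/-- The `∨` poset: the 3-element poset `{a, b, c}` (`a = 0`, `b = 1`, `c = 2`) with
`a < b`, `a < c` and `b, c` incomparable. -/
def Vee := Fin 3

instance : DecidableEq Vee := instDecidableEqFin 3
instance : Fintype Vee := Fin.fintype 3

instance : PartialOrder Vee where
  le := VeeRel
  le_refl _ := Or.inl rfl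
  le_trans := by show ∀ a b c : Fin 3, VeeRel a b → VeeRel b c → VeeRel a c; decide
  le_antisymm := by show ∀ a b : Fin 3, VeeRel a b → VeeRel b a → a = b; decide

/-- The order relation of `J`: `0 < 1`, `0 < 2 < 3`, and `1` incomparable to `2, 3`. -/
def Jrel (x y : Fin 4) : Prop :=
  x.val = y.val ∨ (x.val = 0 ∧ y.val ≠ 0) ∨ (x.val = 2 ∧ y.val = 3)

instance : DecidableRel Jrel := fun x y => by unfold Jrel; infer_instance

/-- `J`: the 4-element poset `{z, u, v₁, v₂}` (`z = 0`, `u = 1`, `v₁ = 2`, `v₂ = 3`) with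
`z < u`, `z < v₁ < v₂`, `z < v₂`, and `u` incomparable to `v₁` and `v₂`. -/
def J := Fin 4

instance : DecidableEq J := instDecidableEqFin 4
instance : Fintype J := Fin.fintype 4

instance : PartialOrder J where
  le := Jrel
  le_refl _ := Or.inl rfl
  le_trans := by show ∀ a b c : Fin 4, Jrel a b → Jrel b c → Jrel a c; decide
  le_antisymm := by show ∀ a b : Fin 4, Jrel a b → Jrel b a → a = b; decide

lemma isCopyJ {Q' : Type*} [PartialOrder Q'] (g : Fin 4 → Q')
    (h01 : g 0 < g 1) (h02 : g 0 < g 2) (h23 : g 2 < g 3)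
    (h12 : ¬ g 1 ≤ g 2) (h21 : ¬ g 2 ≤ g 1)
    (h13 : ¬ g 1 ≤ g 3) (h31 : ¬ g 3 ≤ g 1) :
    IsCopy (show J → Q' from g) := by
  have h03 : g 0 < g 3 := h02.trans h23
  have n10 : ¬ g 1 ≤ g 0 := fun h => h01.ne (le_antisymm h01.le h)
  have n20 : ¬ g 2 ≤ g 0 := fun h => h02.ne (le_antisymm h02.le h)
  have n30 : ¬ g 3 ≤ g 0 := fun h => h03.ne (le_antisymm h03.le h)
  have n32 : ¬ g 3 ≤ g 2 := fun h => h23.ne (le_antisymm h23.le h)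
  constructor
  · intro i j hij
    fin_cases i <;> fin_cases j <;>
      first
        | rfl
        | exact absurd hij h01.ne
        | exact absurd hij h02.ne
        | exact absurd hij h03.ne
        | exact absurd hij h23.ne
        | exact absurd hij.symm h01.ne
        | exact absurd hij.symm h02.ne
        | exact absurd hij.symm h03.ne
        | exact absurd hij.symm h23.ne
        | exact absurd hij.le h12
        | exact absurd hij.le h21
        | exact absurd hij.le h13
        | exact absurd hij.le h31
  · intro p p'
    fin_cases p <;> fin_cases p' <;>
      first
        | exact iff_of_true le_rfl (by decide : Jrel _ _)
        | exact iff_of_true h01.le (by decide : Jrel 0 1)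
        | exact iff_of_true h02.le (by decide : Jrel 0 2)
        | exact iff_of_true h03.le (by decide : Jrel 0 3)
        | exact iff_of_true h23.le (by decide : Jrel 2 3)
        | exact iff_of_false n10 (by decide : ¬ Jrel 1 0)
        | exact iff_of_false n20 (by decide : ¬ Jrel 2 0)
        | exact iff_of_false n30 (by decide : ¬ Jrel 3 0)
        | exact iff_of_false n32 (by decide : ¬ Jrel 3 2)
        | exact iff_of_false h12 (by decide : ¬ Jrel 1 2)
        | exact iff_of_false h21 (by decide : ¬ Jrel 2 1)
        | exact iff_of_false h13 (by decide : ¬ Jrel 1 3)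
        | exact iff_of_false h31 (by decide : ¬ Jrel 3 1)

lemma veeCopy {Q' : Type*} [PartialOrder Q'] (g : J → Q') (hg : IsCopy g)
    (v : Fin 3 → Fin 4) (hv : ∀ p p' : Fin 3, Jrel (v p) (v p') ↔ VeeRel p p')
    (hvinj : Function.Injective v) :
    IsCopy (show Vee → Q' from fun p => g (v p)) :=
  ⟨fun _ _ hab => hvinj (hg.1 hab), fun p p' => (hg.2 (v p) (v p')).trans (hv p p')⟩

lemma rainbowForces_of_copy {Q' : Type*} [PartialOrder Q'] (g : J → Q') (hg : IsCopy g) :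
    RainbowForces Q' Vee := by
  intro c hc
  set G : Fin 4 → Q' := g with hG
  have gle : ∀ i j : Fin 4, Jrel i j → G i ≤ G j := fun i j h => (hg.2 i j).mpr h
  have gne : ∀ i j : Fin 4, i ≠ j → G i ≠ G j := fun i j h he => h (hg.1 he)
  have d01 : c (G 0) ≠ c (G 1) := hc _ _ (gne 0 1 (by decide)) (Or.inl (gle 0 1 (by decide)))
  have d02 : c (G 0) ≠ c (G 2) := hc _ _ (gne 0 2 (by decide)) (Or.inl (gle 0 2 (by decide)))
  have d03 : c (G 0) ≠ c (G 3) := hc _ _ (gne 0 3 (by decide)) (Or.inl (gle 0 3 (by decide)))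
  have d23 : c (G 2) ≠ c (G 3) := hc _ _ (gne 2 3 (by decide)) (Or.inl (gle 2 3 (by decide)))
  by_cases h12 : c (G 1) = c (G 2)
  · refine ⟨fun p => G ((![0,1,3] : Fin 3 → Fin 4) p),
      veeCopy g hg (![0,1,3] : Fin 3 → Fin 4) (by decide) (by decide), ?_⟩
    have d13 : c (G 1) ≠ c (G 3) := h12 ▸ d23
    intro i j hij
    have hij' : c (G ((![0,1,3] : Fin 3 → Fin 4) i)) = c (G ((![0,1,3] : Fin 3 → Fin 4) j)) := hij
    fin_cases i <;> fin_cases j <;>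
      first
        | rfl
        | exact absurd hij' d01 | exact absurd hij'.symm d01
        | exact absurd hij' d03 | exact absurd hij'.symm d03
        | exact absurd hij' d13 | exact absurd hij'.symm d13
  · refine ⟨fun p => G ((![0,1,2] : Fin 3 → Fin 4) p),
      veeCopy g hg (![0,1,2] : Fin 3 → Fin 4) (by decide) (by decide), ?_⟩
    intro i j hij
    have hij' : c (G ((![0,1,2] : Fin 3 → Fin 4) i)) = c (G ((![0,1,2] : Fin 3 → Fin 4) j)) := hij
    fin_cases i <;> fin_cases j <;>
      first
        | rfl
        | exact absurd hij' d01 | exact absurd hij'.symm d01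
        | exact absurd hij' d02 | exact absurd hij'.symm d02
        | exact absurd hij' h12 | exact absurd hij'.symm h12

theorem not_rf_of_no_J (Q : Type*) [PartialOrder Q] [Finite Q]
    (hJ : ∀ g : J → Q, ¬ IsCopy g) : ¬ RainbowForces Q Vee := by
  classical
  set S : Q → Q → Prop := fun x y => (¬ x ≤ y ∧ ¬ y ≤ x) ∧ ∃ a, a < x ∧ a < y with hS
  have hSsymm : Symmetric S := fun x y ⟨⟨h1, h2⟩, a, ha1, ha2⟩ => ⟨⟨h2, h1⟩, a, ha2, ha1⟩
  have key : ∀ x y : Q, Relation.ReflTransGen S x y → x ≤ y → x = y := by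
    intro x y h
    induction h using Relation.ReflTransGen.head_induction_on with
    | refl => exact fun _ => rfl
    | @head a cc hac hcy ih =>
      intro hay
      by_contra hne
      have haylt : a < y := lt_of_le_of_ne hay hne
      obtain ⟨⟨hac1, hca1⟩, w, hwa, hwc⟩ := hac
      by_cases hcy1 : cc ≤ y
      · exact hac1 (ih hcy1 ▸ hay)
      by_cases hyc : y ≤ cc
      · exact hac1 (haylt.le.trans hyc)
      · exact hJ ![w, cc, a, y]
          (isCopyJ ![w, cc, a, y] hwc hwa haylt hca1 hac1 hcy1 hyc)
  intro hrf
  set sto : Setoid Q := ⟨Relation.ReflTransGen S,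
    ⟨fun _ => Relation.ReflTransGen.refl,
     fun h => (@Relation.ReflTransGen.stdSymm _ S ⟨fun _ _ h => hSsymm h⟩).symm _ _ h,
     fun h h' => h.trans h'⟩⟩ with hsto
  obtain ⟨tn, htn⟩ := exists_injective_nat (Quotient sto)
  set c : Q → ℕ := fun x => tn (Quotient.mk sto x) with hc
  have hproper : ProperColoring c := by
    intro q q' hne hcmp
    intro hcq
    have hq : Relation.ReflTransGen S q q' := Quotient.exact (htn hcq)
    rcases hcmp with h | h
    · exact hne (key _ _ hq h)
    · exact hne ((key _ _ ((@Relation.ReflTransGen.stdSymm _ S ⟨fun _ _ h => hSsymm h⟩).symm _ _ hq) h).symm)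
  obtain ⟨f, hf, hrb⟩ := hrf c hproper
  set F : Fin 3 → Q := f with hF
  have h01 : F 0 < F 1 := lt_of_le_of_ne ((hf.2 (0 : Fin 3) (1 : Fin 3)).mpr (by decide : VeeRel 0 1))
    (fun h => (by decide : (0 : Fin 3) ≠ 1) (hf.1 h))
  have h02 : F 0 < F 2 := lt_of_le_of_ne ((hf.2 (0 : Fin 3) (2 : Fin 3)).mpr (by decide : VeeRel 0 2))
    (fun h => (by decide : (0 : Fin 3) ≠ 2) (hf.1 h))
  have h12 : ¬ F 1 ≤ F 2 := fun h => (by decide : ¬ VeeRel 1 2) ((hf.2 (1 : Fin 3) (2 : Fin 3)).mp h)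
  have h21 : ¬ F 2 ≤ F 1 := fun h => (by decide : ¬ VeeRel 2 1) ((hf.2 (2 : Fin 3) (1 : Fin 3)).mp h)
  have hS12 : S (F 1) (F 2) := ⟨⟨h12, h21⟩, F 0, h01, h02⟩
  have hceq : c (F 1) = c (F 2) := congrArg tn (Quotient.sound (Relation.ReflTransGen.single hS12))
  exact (by decide : (1 : Fin 3) ≠ 2) (hrb hceq)

lemma not_rainbowForces_del (j : Fin 4) (col : Fin 4 → ℕ)
    (hp : ∀ x y : Fin 4, (x ≠ j ∧ y ≠ j ∧ x ≠ y ∧ (Jrel x y ∨ Jrel y x)) → col x ≠ col y)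
    (hnr : ∀ x y z : Fin 4, (x ≠ j ∧ y ≠ j ∧ z ≠ j ∧
      Jrel x y ∧ Jrel x z ∧ ¬ Jrel y z ∧ ¬ Jrel z y) → col y = col z) :
    ¬ RainbowForces {x : J // x ≠ j} Vee := by
  intro h
  obtain ⟨f, hf, hrb⟩ := h (fun x => col x.val)
    (fun q q' hne hcmp => hp q.1 q'.1 ⟨q.2, q'.2, (fun he => hne (Subtype.ext he)), hcmp⟩)
  have h01 : f (0 : Fin 3) ≤ f (1 : Fin 3) := (hf.2 _ _).mpr (by decide : VeeRel 0 1)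
  have h02 : f (0 : Fin 3) ≤ f (2 : Fin 3) := (hf.2 _ _).mpr (by decide : VeeRel 0 2)
  have h12 : ¬ f (1 : Fin 3) ≤ f (2 : Fin 3) :=
    fun hh => (by decide : ¬ VeeRel 1 2) ((hf.2 _ _).mp hh)
  have h21 : ¬ f (2 : Fin 3) ≤ f (1 : Fin 3) :=
    fun hh => (by decide : ¬ VeeRel 2 1) ((hf.2 _ _).mp hh)
  have hceq := hnr (f (0 : Fin 3)).1 (f (1 : Fin 3)).1 (f (2 : Fin 3)).1
    ⟨(f (0 : Fin 3)).2, (f (1 : Fin 3)).2, (f (2 : Fin 3)).2, h01, h02, h12, h21⟩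
  exact (by decide : (1 : Fin 3) ≠ 2) (hrb hceq)

lemma not_rf_J_del : ∀ j : Fin 4, ¬ RainbowForces {x : J // x ≠ j} Vee := by
  intro j
  fin_cases j
  · exact not_rainbowForces_del 0 ![0,1,2,3] (by decide) (by decide)
  · exact not_rainbowForces_del 1 ![0,1,2,3] (by decide) (by decide)
  · exact not_rainbowForces_del 2 ![0,1,7,1] (by decide) (by decide)
  · exact not_rainbowForces_del 3 ![0,1,1,7] (by decide) (by decide)

lemma rf_of_iso {A B : Type*} [PartialOrder A] [PartialOrder B] (e : A ≃o B)
    (h : RainbowForces A Vee) : RainbowForces B Vee := by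
  intro c hc
  obtain ⟨f, hf, hrb⟩ := h (fun a => c (e a))
    (fun q q' hne hcmp => hc _ _ (fun he => hne (e.injective he))
      (hcmp.imp (fun hh => e.le_iff_le.mpr hh) (fun hh => e.le_iff_le.mpr hh)))
  exact ⟨fun p => e (f p), ⟨fun a b hab => hf.1 (e.injective hab),
    fun p p' => e.le_iff_le.trans (hf.2 p p')⟩, hrb⟩

def delIso {A B : Type*} [PartialOrder A] [PartialOrder B] (e : A ≃o B) (q : A) :
    {x : A // x ≠ q} ≃o {y : B // y ≠ e q} where
  toEquiv := e.toEquiv.subtypeEquiv (fun a => (not_congr ⟨fun h => congrArg e h,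
    fun h => e.injective h⟩))
  map_rel_iff' := @fun a b => e.le_iff_le


/-- A finite poset `Q` minimally rainbow forces the poset `∨` if and only if
`Q` is order-isomorphic to `J`. -/
theorem statement8 (Q : Type) [PartialOrder Q] [Fintype Q] :
    MinRainbowForces Q Vee ↔ Nonempty (Q ≃o J) := by
  constructor
  · rintro ⟨hrf, hmin⟩
    have hex : ∃ g : J → Q, IsCopy g := by
      by_contra h
      push_neg at h
      exact not_rf_of_no_J Q h hrf
    obtain ⟨g, hg⟩ := hex
    have hsurj : Function.Surjective g := by
      by_contra h
      obtain ⟨q, hq⟩ : ∃ q : Q, ∀ jj : J, g jj ≠ q := by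
        by_contra h2
        push_neg at h2
        exact h (fun b => h2 b)
      refine hmin q (rainbowForces_of_copy (fun jj => ⟨g jj, hq jj⟩) ?_)
      exact ⟨fun a b hab => hg.1 (congrArg Subtype.val hab), fun p p' => hg.2 p p'⟩
    refine ⟨(OrderIso.symm ⟨Equiv.ofBijective g ⟨hg.1, hsurj⟩, ?_⟩)⟩
    intro a b
    exact hg.2 a b
  · rintro ⟨e⟩
    constructor
    · exact rainbowForces_of_copy (fun j => e.symm j)
        ⟨e.symm.injective, fun p p' => e.symm.le_iff_le⟩
    · intro q hrf'
      exact not_rf_J_del (e q) (rf_of_iso (delIso e q) hrf')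
end

section
/- For every k ≥ 2 there exists n₀ such that for all n ≥ n₀, La_R*(n,A_k) = Σ(n,k−1) + 2. -/
/-- `La_R^*(n,P)`: the maximum size of a family of subsets of `[n]` admitting a proper
coloring with no rainbow copy of `P`. -/
noncomputable def LaR (n : ℕ) (P : Type*) [PartialOrder P] : ℕ :=
  sSup {m : ℕ | ∃ 𝓕 : Finset (Finset (Fin n)), 𝓕.card = m ∧ AvoidsRainbow n P 𝓕}

/-- `Σ(n,k) = ∑_{i=1}^k C(n, ⌊(n-k)/2⌋ + i)`, the sum of the `k` largest binomial
coefficients of order `n`. -/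
def SigmaL (n k : ℕ) : ℕ := ∑ i ∈ Finset.Icc 1 k, n.choose ((n - k) / 2 + i)


open Finset

namespace RB

/-- binomials increase up to the middle -/
lemma choose_mono_mid {n a b : ℕ} (hab : a ≤ b) (hb : b ≤ n/2) : n.choose a ≤ n.choose b := by
  induction b with
  | zero => simp [Nat.le_zero.mp hab]
  | succ b ih =>
    rcases Nat.lt_or_ge a (b+1) with h | h
    · exact le_trans (ih (Nat.lt_succ_iff.mp h) (le_trans (Nat.le_succ b) hb))
        (Nat.choose_le_succ_of_lt_half_left hb)
    · have : a = b + 1 := le_antisymm hab h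
      subst this; rfl

lemma choose_symm' {n l : ℕ} (h : l ≤ n) : n.choose l = n.choose (n - l) := by
  have := Nat.choose_symm (Nat.sub_le n l)
  rwa [Nat.sub_sub_self h] at this

/-- doubling below n/3 -/
lemma choose_double {n s t : ℕ} (h3 : 3*t ≤ n) (hst : s ≤ t) :
    2^(t-s) * n.choose s ≤ n.choose t := by
  induction t with
  | zero => simp [Nat.le_zero.mp hst]
  | succ t ih =>
    rcases Nat.lt_or_ge s (t+1) with h | h
    · have hs : s ≤ t := Nat.lt_succ_iff.mp h
      have ih' := ih (by omega) hs
      have hdbl : 2 * n.choose t ≤ n.choose (t+1) := by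
        have hid := Nat.choose_succ_right_eq n t
        have hle : n.choose t * (2*(t+1)) ≤ n.choose t * (n - t) :=
          Nat.mul_le_mul_left _ (by omega)
        have : 2 * n.choose t * (t+1) ≤ n.choose (t+1) * (t+1) := by
          rw [hid]; ring_nf; ring_nf at hle; omega
        exact Nat.le_of_mul_le_mul_right this (Nat.succ_pos t)
      have heq : 2^(t+1-s) * n.choose s = 2 * (2^(t-s) * n.choose s) := by
        rw [← mul_assoc, ← pow_succ']
        congr 2
        omega
      rw [heq]
      calc 2 * (2^(t-s)*n.choose s) ≤ 2 * n.choose t := Nat.mul_le_mul_left _ ih'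
        _ ≤ n.choose (t+1) := hdbl
    · have : s = t + 1 := le_antisymm hst h
      subst this; simp

/-- 2^n ≤ (n+1) * central -/
lemma two_pow_le {n : ℕ} : 2^n ≤ (n+1) * n.choose (n/2) := by
  have h := Nat.sum_range_choose n
  calc 2^n = ∑ m ∈ range (n+1), n.choose m := h.symm
    _ ≤ (range (n+1)).card • n.choose (n/2) :=
        Finset.sum_le_card_nsmul _ _ _ (fun i _ => Nat.choose_le_middle i n)
    _ = (n+1) * n.choose (n/2) := by simp [Finset.card_range, smul_eq_mul]

/-- single step near the middle -/
lemma step_near_mid {n r : ℕ} (hr : r + 1 ≤ n/2) :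
    (n - r) * (n.choose (r+1) - n.choose r) = (n - 2*r - 1) * n.choose (r+1) := by
  have hid := Nat.choose_succ_right_eq n r
  have h2 : (n - r) * n.choose r = (r+1) * n.choose (r+1) := by
    have := hid.symm
    calc (n-r) * n.choose r = n.choose r * (n - r) := by ring
      _ = n.choose (r+1) * (r+1) := hid.symm
      _ = (r+1) * n.choose (r+1) := by ring
  rw [Nat.mul_sub, h2, ← Nat.sub_mul]
  congr 1
  omega

/-- telescoped: distance from the middle -/
lemma mid_minus_j {n k j : ℕ} (hk : 1 ≤ k) (hj : j ≤ k) (hn : 16*k^3 ≤ n) :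
    n * (n.choose (n/2) - n.choose (n/2 - j)) ≤ 4*k*j * n.choose (n/2) := by
  induction j with
  | zero => simp
  | succ j ih =>
    have hjk : j ≤ k := by omega
    have hk3 : k ≤ k^3 := Nat.le_self_pow (by norm_num) k
    have hkn : 8*k ≤ n/2 := by omega
    have ih' := ih hjk
    set r := n/2 - (j+1) with hr
    have hr1 : r + 1 = n/2 - j := by omega
    have hstep := step_near_mid (n := n) (r := r) (by omega)
    rw [hr1] at hstep
    have hmono1 : n.choose r ≤ n.choose (n/2 - j) :=
      choose_mono_mid (by omega) (by omega)
    have hmono2 : n.choose (n/2 - j) ≤ n.choose (n/2) :=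
      choose_mono_mid (by omega) (by omega)
    -- n * (C_{r+1} - C_r) ≤ 2 * (n-r) * (C_{r+1} - C_r) = 2(n-2r-1) C_{r+1} ≤ 4k C
    have hstepbound : n * (n.choose (n/2 - j) - n.choose r) ≤ 4*k * n.choose (n/2) := by
      have hn2r : n ≤ 2*(n-r) := by omega
      have c1 : n * (n.choose (n/2 - j) - n.choose r)
          ≤ 2*(n-r) * (n.choose (n/2 - j) - n.choose r) := Nat.mul_le_mul_right _ hn2r
      have c2 : 2*(n-r) * (n.choose (n/2 - j) - n.choose r)
          = 2 * ((n - 2*r - 1) * n.choose (n/2 - j)) := by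
        rw [mul_assoc 2 (n-r) _, hstep]
      have hsmall : n - 2*r - 1 ≤ 2*k := by omega
      have c3 : 2 * ((n - 2*r - 1) * n.choose (n/2 - j)) ≤ 2 * (2*k * n.choose (n/2)) :=
        Nat.mul_le_mul_left _ (Nat.mul_le_mul hsmall hmono2)
      calc n * (n.choose (n/2 - j) - n.choose r)
          ≤ 2*(n-r) * (n.choose (n/2 - j) - n.choose r) := c1
        _ = 2 * ((n - 2*r - 1) * n.choose (n/2 - j)) := c2
        _ ≤ 2 * (2*k * n.choose (n/2)) := c3
        _ = 4*k * n.choose (n/2) := by ring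
    have htel : n.choose (n/2) - n.choose r
        = (n.choose (n/2) - n.choose (n/2 - j)) + (n.choose (n/2 - j) - n.choose r) := by
      omega
    rw [htel, Nat.mul_add]
    calc n * (n.choose (n/2) - n.choose (n/2-j)) + n * (n.choose (n/2-j) - n.choose r)
        ≤ 4*k*j * n.choose (n/2) + 4*k* n.choose (n/2) := Nat.add_le_add ih' hstepbound
      _ = 4*k*(j+1) * n.choose (n/2) := by ring

/-- the k-window around the middle loses at most a (4k)-fraction -/
lemma cmin_close {n k : ℕ} (hk : 1 ≤ k) (hn : 32*k^3 ≤ n) :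
    8*k * (n.choose (n/2) - n.choose (n/2 - k)) ≤ n.choose (n/2) := by
  have h := mid_minus_j (n := n) (k := k) hk le_rfl (by omega)
  have hkk : (32*k^3) * (n.choose (n/2) - n.choose (n/2-k)) ≤ n * (n.choose (n/2) - n.choose (n/2-k)) :=
    Nat.mul_le_mul_right _ hn
  have hmain : (32*k^3) * (n.choose (n/2) - n.choose (n/2-k)) ≤ 4*k*k * n.choose (n/2) := by
    calc (32*k^3) * (n.choose (n/2) - n.choose (n/2-k))
        ≤ n * (n.choose (n/2) - n.choose (n/2-k)) := hkk
      _ ≤ 4*k*k * n.choose (n/2) := h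
  have h4 : (4*k*k) * (8*k * (n.choose (n/2) - n.choose (n/2-k))) ≤ (4*k*k) * n.choose (n/2) := by
    calc (4*k*k) * (8*k * (n.choose (n/2) - n.choose (n/2-k)))
        = (32*k^3) * (n.choose (n/2) - n.choose (n/2-k)) := by ring
      _ ≤ 4*k*k * n.choose (n/2) := hmain
  exact Nat.le_of_mul_le_mul_left h4 (by positivity)

/-- all levels in the middle window are at least `C(n, n/2 - k)` -/
lemma window_ge {n k l : ℕ} (h1 : n/2 ≤ l + k) (h2 : l ≤ n/2 + k) (hln : l ≤ n) :
    n.choose (n/2 - k) ≤ n.choose l := by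
  rcases le_or_gt l (n/2) with h | h
  · exact choose_mono_mid (by omega) h
  · rw [choose_symm' hln]
    exact choose_mono_mid (by omega) (by omega)


/-- central binomial coefficient -/
def cb (t : ℕ) : ℕ := t.choose (t/2)

lemma cb_pos (t : ℕ) : 1 ≤ cb t := Nat.choose_pos (Nat.div_le_self t 2)

lemma cb_even (a : ℕ) (ha : 1 ≤ a) : cb (2*a) = 2 * cb (2*a-1) := by
  obtain ⟨b, rfl⟩ : ∃ b, a = b + 1 := ⟨a - 1, by omega⟩
  have h1 : cb (2*(b+1)) = (2*b+1+1).choose (b+1) := by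
    unfold cb; congr 1 <;> omega
  have h2 : cb (2*(b+1)-1) = (2*b+1).choose b := by
    unfold cb; congr 1 <;> omega
  rw [h1, h2, Nat.choose_succ_succ]
  simp only [Nat.succ_eq_add_one]
  have hsym : (2*b+1).choose (b+1) = (2*b+1).choose b := by
    rw [← Nat.choose_symm (by omega : b + 1 ≤ 2*b+1)]
    congr 1; omega
  omega


lemma cb_dbl (a : ℕ) : cb (2*a+2) = 2 * cb (2*a+1) := by
  have h := cb_even (a+1) (by omega)
  have e2 : 2*(a+1)-1 = 2*a+1 := by omega
  rw [e2] at h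
  have e1 : 2*(a+1) = 2*a+2 := by ring
  rw [e1] at h
  exact h

lemma cb_succ_ge (t : ℕ) : cb t ≤ cb (t+1) := by
  rcases Nat.even_or_odd t with ⟨a, rfl⟩ | ⟨a, rfl⟩
  · -- t = 2a, t+1 = 2a+1
    rcases Nat.eq_zero_or_pos a with rfl | ha
    · simp [cb]
    have h1 : cb (a+a) = (2*a).choose a := by unfold cb; congr 1 <;> omega
    have h2 : cb (a+a+1) = (2*a+1).choose a := by unfold cb; congr 1 <;> omega
    rw [h1, h2]
    obtain ⟨b, rfl⟩ : ∃ b, a = b + 1 := ⟨a - 1, by omega⟩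
    have hps : (2*(b+1)+1).choose (b+1) = (2*(b+1)).choose b + (2*(b+1)).choose (b+1) := by
      have h := Nat.choose_succ_succ (2*(b+1)) b
      simp only [Nat.succ_eq_add_one] at h
      omega
    omega
  · -- t = 2a+1, t+1 = 2a+2 = 2(a+1)
    have h1 : cb (2*a+1+1) = 2 * cb (2*a+1) := by
      have h0 := cb_dbl a
      have e1 : 2*a+2 = 2*a+1+1 := by omega
      have e2 : 2*a+1 = 2*a+1 := by omega
      rw [e1, e2] at h0
      exact h0
    have := cb_pos (2*a+1)
    omega

lemma cb_mono : Monotone cb := monotone_nat_of_le_succ cb_succ_ge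

lemma cb_strict {t : ℕ} (ht : 1 ≤ t) : cb t < cb (t+1) := by
  rcases Nat.even_or_odd t with ⟨a, rfl⟩ | ⟨a, rfl⟩
  · have ha : 1 ≤ a := by omega
    have h1 : cb (a+a) = (2*a).choose a := by unfold cb; congr 1 <;> omega
    have h2 : cb (a+a+1) = (2*a+1).choose a := by unfold cb; congr 1 <;> omega
    rw [h1, h2]
    obtain ⟨b, rfl⟩ : ∃ b, a = b + 1 := ⟨a - 1, by omega⟩
    have hps := Nat.choose_succ_succ (2*(b+1)) b
    simp only [Nat.succ_eq_add_one] at hps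
    have hpos : 0 < (2*(b+1)).choose b := Nat.choose_pos (by omega)
    omega
  · have h1 : cb (2*a+1+1) = 2 * cb (2*a+1) := by
      have h0 := cb_dbl a
      have e1 : 2*a+2 = 2*a+1+1 := by omega
      have e2 : 2*a+1 = 2*a+1 := by omega
      rw [e1, e2] at h0
      exact h0
    have := cb_pos (2*a+1)
    omega

lemma cb_two_step (t : ℕ) : 2 * cb t ≤ cb (t+2) := by
  rcases Nat.even_or_odd t with ⟨a, rfl⟩ | ⟨a, rfl⟩
  · -- even : cb(t+2) = cb(2(a+1)) = 2 cb(2a+1) ≥ 2 cb(2a)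
    have h1 : cb (a+a+2) = 2 * cb (a+a+1) := by
      have h0 := cb_dbl a
      have e1 : 2*a+2 = a+a+2 := by omega
      have e2 : 2*a+1 = a+a+1 := by omega
      rw [e1, e2] at h0
      exact h0
    have h2 := cb_succ_ge (a+a)
    omega
  · -- odd: cb(2a+3) ≥ cb(2a+2) = 2cb(2a+1)
    have h1 : cb (2*a+1+1) = 2 * cb (2*a+1) := by
      have h0 := cb_dbl a
      have e1 : 2*a+2 = 2*a+1+1 := by omega
      have e2 : 2*a+1 = 2*a+1 := by omega
      rw [e1, e2] at h0
      exact h0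
    have h2 := cb_succ_ge (2*a+1+1)
    have e : 2*a+1+2 = 2*a+1+1+1 := by omega
    rw [e]
    omega

lemma cb_penult {n : ℕ} (hn : 9 ≤ n) : 16 * cb (n-1) ≤ 9 * cb n := by
  rcases Nat.even_or_odd n with ⟨a, rfl⟩ | ⟨a, rfl⟩
  · have h1 : cb (a+a) = 2 * cb (a+a-1) := by
      have h := cb_even a (by omega)
      have e2 : 2*a-1 = a+a-1 := by omega
      rw [e2] at h
      have e1 : 2*a = a+a := by omega
      rw [e1] at h
      exact h
    omega
  · -- n = 2a+1, a ≥ 2 : (a+1) cb(2a+1) = (2a+1) cb(2a)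
    have ha : 4 ≤ a := by omega
    have hid : (2*a+1) * (2*a).choose a = (2*a+1).choose (a+1) * (a+1) := by
      have := Nat.add_one_mul_choose_eq (2*a) a
      simpa using this
    have hsym : (2*a+1).choose (a+1) = (2*a+1).choose a := by
      rw [← Nat.choose_symm (by omega : a + 1 ≤ 2*a+1)]
      congr 1; omega
    have h1 : cb (2*a+1) = (2*a+1).choose a := by unfold cb; congr 1; omega
    have h2 : cb (2*a+1-1) = (2*a).choose a := by unfold cb; congr 1; omega
    rw [h1, h2]
    have key : (2*a+1) * (2*a).choose a = (a+1) * (2*a+1).choose a := by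
      rw [hid, hsym]; ring
    have h3 : (2*a+1) * (16 * (2*a).choose a) ≤ (2*a+1) * (9 * (2*a+1).choose a) := by
      have he : (2*a+1) * (16 * (2*a).choose a) = 16 * ((a+1) * (2*a+1).choose a) := by
        calc (2*a+1) * (16 * (2*a).choose a) = 16 * ((2*a+1) * (2*a).choose a) := by ring
          _ = 16 * ((a+1) * (2*a+1).choose a) := by rw [key]
      rw [he]
      have h8 : 16*(a+1) ≤ 9*(2*a+1) := by omega
      calc 16 * ((a+1) * (2*a+1).choose a) = (16*(a+1)) * (2*a+1).choose a := by ring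
        _ ≤ (9*(2*a+1)) * (2*a+1).choose a := Nat.mul_le_mul_right _ h8
        _ = (2*a+1) * (9 * (2*a+1).choose a) := by ring
    exact Nat.le_of_mul_le_mul_left h3 (by omega)

lemma cb_pair {n m : ℕ} (hn : 9 ≤ n) (h1 : 1 ≤ m) (h2 : m ≤ n-1) :
    cb m + cb (n-m) ≤ 1 + cb (n-1) := by
  rcases eq_or_ne m 1 with rfl | hm1
  · simp [cb]
  rcases eq_or_ne m (n-1) with rfl | hmn1
  · have : n - (n-1) = 1 := by omega
    rw [this]; simp [cb]
  rcases eq_or_ne m 2 with rfl | hm2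
  · have hc2 : cb 2 = 2 := by decide
    rw [hc2]
    have := cb_strict (t := n-2) (by omega)
    have e : n - 2 + 1 = n - 1 := by omega
    rw [e] at this
    omega
  rcases eq_or_ne m (n-2) with rfl | hmn2
  · have e : n - (n-2) = 2 := by omega
    rw [e]
    have hc2 : cb 2 = 2 := by decide
    rw [hc2]
    have := cb_strict (t := n-2) (by omega)
    have e2 : n - 2 + 1 = n - 1 := by omega
    rw [e2] at this
    omega
  · -- 3 ≤ m ≤ n-3
    have hm3 : 3 ≤ m := by omega
    have hmn3 : m ≤ n - 3 := by omega
    have c1 : cb m ≤ cb (n-3) := cb_mono (by omega)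
    have c2 : cb (n-m) ≤ cb (n-3) := cb_mono (by omega)
    have c3 : 2 * cb (n-3) ≤ cb (n-1) := by
      have := cb_two_step (n-3)
      have e : n - 3 + 2 = n - 1 := by omega
      rw [e] at this; exact this
    omega

section C
variable {n : ℕ}

lemma antichain_subsets_card {𝒜 : Finset (Finset (Fin n))}
    (hA : IsAntichain (· ⊆ ·) (𝒜 : Set (Finset (Fin n))))
    {G : Finset (Fin n)} (hsub : ∀ F ∈ 𝒜, F ⊆ G) : 𝒜.card ≤ cb G.card := by
  classical
  set ι : Finset (Fin n) → Finset {x // x ∈ G} := fun F => F.subtype (· ∈ G) with hι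
  have hback : ∀ F ∈ 𝒜, (ι F).map (Function.Embedding.subtype _) = F := by
    intro F hF
    rw [hι]; dsimp only; rw [Finset.subtype_map]
    exact Finset.filter_true_of_mem (fun x hx => hsub F hF hx)
  have hinj : Set.InjOn ι 𝒜 := by
    intro F hF F' hF' h
    rw [← hback F hF, ← hback F' hF', h]
  have hcard : 𝒜.card = (𝒜.image ι).card := (Finset.card_image_of_injOn hinj).symm
  have hanti : IsAntichain (· ⊆ ·) ((𝒜.image ι : Finset (Finset {x // x ∈ G})) : Set (Finset {x // x ∈ G})) := by
    rintro x hx y hy hxy hsubxy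
    simp only [coe_image, Set.mem_image, mem_coe] at hx hy
    obtain ⟨F, hF, rfl⟩ := hx
    obtain ⟨F', hF', rfl⟩ := hy
    have hFF' : F ≠ F' := fun h => hxy (by rw [h])
    have hss : F ⊆ F' := by
      rw [← hback F hF, ← hback F' hF']
      exact Finset.map_subset_map.mpr hsubxy
    exact hA (Finset.mem_coe.mpr hF) (Finset.mem_coe.mpr hF') hFF' hss
  have hs := IsAntichain.sperner hanti
  rw [Fintype.card_coe] at hs
  rw [hcard]
  exact hs

lemma antichain_supsets_card {𝒜 : Finset (Finset (Fin n))}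
    (hA : IsAntichain (· ⊆ ·) (𝒜 : Set (Finset (Fin n))))
    {G : Finset (Fin n)} (hsub : ∀ F ∈ 𝒜, G ⊆ F) : 𝒜.card ≤ cb (n - G.card) := by
  classical
  have hinj : Set.InjOn (fun F : Finset (Fin n) => Fᶜ) 𝒜 :=
    fun F _ F' _ h => compl_injective h
  have hcard : 𝒜.card = (𝒜.image (fun F => Fᶜ)).card := (Finset.card_image_of_injOn hinj).symm
  have hanti : IsAntichain (· ⊆ ·) ((𝒜.image (fun F => Fᶜ) : Finset (Finset (Fin n))) : Set (Finset (Fin n))) := by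
    rintro x hx y hy hxy hsubxy
    simp only [coe_image, Set.mem_image, mem_coe] at hx hy
    obtain ⟨F, hF, rfl⟩ := hx
    obtain ⟨F', hF', rfl⟩ := hy
    have hFF' : F' ≠ F := fun h => hxy (by rw [h])
    exact hA (Finset.mem_coe.mpr hF') (Finset.mem_coe.mpr hF) hFF'
      (Finset.compl_subset_compl.mp hsubxy)
  have hsub' : ∀ F ∈ 𝒜.image (fun F => Fᶜ), F ⊆ Gᶜ := by
    intro F hF
    simp only [mem_image] at hF
    obtain ⟨F', hF', rfl⟩ := hF
    exact Finset.compl_subset_compl.mpr (hsub F' hF')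
  have h := antichain_subsets_card hanti hsub'
  rw [Finset.card_compl, Fintype.card_fin] at h
  rw [hcard]
  exact h

lemma antichain_comp_card (hn : 9 ≤ n) {𝒜 : Finset (Finset (Fin n))}
    (hA : IsAntichain (· ⊆ ·) (𝒜 : Set (Finset (Fin n))))
    {G : Finset (Fin n)} (h1 : 1 ≤ G.card) (h2 : G.card ≤ n - 1) :
    (𝒜.filter (fun F => F ⊆ G ∨ G ⊆ F)).card ≤ 1 + cb (n-1) := by
  classical
  have hsplit : 𝒜.filter (fun F => F ⊆ G ∨ G ⊆ F) ⊆
      𝒜.filter (fun F => F ⊆ G) ∪ 𝒜.filter (fun F => G ⊆ F) := by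
    intro F hF
    simp only [mem_filter, mem_union] at *
    tauto
  have c1 : (𝒜.filter (fun F => F ⊆ G)).card ≤ cb G.card :=
    antichain_subsets_card (hA.subset (by intro x hx; exact (Finset.mem_coe.mpr (Finset.mem_of_mem_filter x (Finset.mem_coe.mp hx)))))
      (fun F hF => (mem_filter.mp hF).2)
  have c2 : (𝒜.filter (fun F => G ⊆ F)).card ≤ cb (n - G.card) :=
    antichain_supsets_card (hA.subset (by intro x hx; exact (Finset.mem_coe.mpr (Finset.mem_of_mem_filter x (Finset.mem_coe.mp hx)))))
      (fun F hF => (mem_filter.mp hF).2)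
  calc (𝒜.filter (fun F => F ⊆ G ∨ G ⊆ F)).card
      ≤ (𝒜.filter (fun F => F ⊆ G) ∪ 𝒜.filter (fun F => G ⊆ F)).card := card_le_card hsplit
    _ ≤ (𝒜.filter (fun F => F ⊆ G)).card + (𝒜.filter (fun F => G ⊆ F)).card := card_union_le _ _
    _ ≤ cb G.card + cb (n - G.card) := Nat.add_le_add c1 c2
    _ ≤ 1 + cb (n-1) := cb_pair hn h1 h2

lemma comp_card (G : Finset (Fin n)) :
    (univ.filter (fun F : Finset (Fin n) => F ⊆ G ∨ G ⊆ F)).card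
      ≤ 2^G.card + 2^(n - G.card) := by
  classical
  have hsplit : (univ.filter fun F : Finset (Fin n) => F ⊆ G ∨ G ⊆ F) ⊆
      G.powerset ∪ (univ.filter fun F : Finset (Fin n) => G ⊆ F) := by
    intro F hF
    simp only [mem_filter, mem_union, mem_powerset, mem_univ, true_and] at *
    tauto
  have hsup : (univ.filter fun F : Finset (Fin n) => G ⊆ F).card ≤ 2^(n - G.card) := by
    have hle : (univ.filter fun F : Finset (Fin n) => G ⊆ F).card ≤ (Gᶜ).powerset.card := by
      apply Finset.card_le_card_of_injOn (fun F => F \ G)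
      · intro F hF
        simp only [mem_coe, mem_filter, mem_univ, true_and] at hF
        simp only [mem_coe, mem_powerset]
        intro x hx
        simp only [mem_sdiff] at hx
        simp [Finset.mem_compl, hx.2]
      · intro F hF F' hF' h
        simp only [coe_filter, Set.mem_setOf_eq, mem_univ, true_and] at hF hF'
        have e1 : G ∪ (F \ G) = F := Finset.union_sdiff_of_subset hF
        have e2 : G ∪ (F' \ G) = F' := Finset.union_sdiff_of_subset hF'
        rw [← e1, ← e2]
        simp only at h
        rw [h]
    rwa [card_powerset, card_compl, Fintype.card_fin] at hle
  calc (univ.filter fun F : Finset (Fin n) => F ⊆ G ∨ G ⊆ F).card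
      ≤ (G.powerset ∪ (univ.filter fun F : Finset (Fin n) => G ⊆ F)).card := card_le_card hsplit
    _ ≤ G.powerset.card + (univ.filter fun F : Finset (Fin n) => G ⊆ F).card := card_union_le _ _
    _ ≤ 2^G.card + 2^(n - G.card) := by
        rw [card_powerset]
        exact Nat.add_le_add_left hsup _

/-- a set is in the "middle window" -/
def MidP (n : ℕ) (F : Finset (Fin n)) : Prop := n ≤ 6*F.card ∧ 6*F.card ≤ 5*n

instance (F : Finset (Fin n)) : Decidable (MidP n F) := by unfold MidP; infer_instance

lemma comp_card_mid {G : Finset (Fin n)} (hG : MidP n G) :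
    (univ.filter (fun F : Finset (Fin n) => F ⊆ G ∨ G ⊆ F)).card ≤ 2^(5*n/6+2) := by
  obtain ⟨hG1, hG2⟩ := hG
  have h := comp_card G
  have e1 : 2^G.card ≤ 2^(5*n/6+1) := Nat.pow_le_pow_right (by norm_num) (by omega)
  have e2 : 2^(n-G.card) ≤ 2^(5*n/6+1) := Nat.pow_le_pow_right (by norm_num) (by omega)
  have : 2^(5*n/6+1) + 2^(5*n/6+1) = 2^(5*n/6+2) := by ring
  omega

lemma bad_level_le {l : ℕ} (hl : l ≤ n) (hbad : ¬ (n ≤ 6*l ∧ 6*l ≤ 5*n)) :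
    n.choose l ≤ n.choose (n/6) := by
  rcases Nat.lt_or_ge (6*l) n with h | h
  · exact choose_mono_mid (by omega) (by omega)
  · have h5 : 5*n < 6*l := by omega
    rw [choose_symm' hl]
    exact choose_mono_mid (by omega) (by omega)

lemma out_card :
    2^(n/6) * (univ.filter (fun F : Finset (Fin n) => ¬ MidP n F)).card
      ≤ (n+1) * n.choose (n/2) := by
  classical
  have hsub : (univ.filter (fun F : Finset (Fin n) => ¬ MidP n F)) ⊆
      ((range (n+1)).filter (fun l => ¬ (n ≤ 6*l ∧ 6*l ≤ 5*n))).biUnion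
        (fun l => (univ : Finset (Fin n)).powersetCard l) := by
    intro F hF
    simp only [mem_filter, mem_univ, true_and] at hF
    simp only [mem_biUnion, mem_filter, mem_range]
    refine ⟨F.card, ⟨?_, hF⟩, ?_⟩
    · have := F.card_le_univ
      rw [Fintype.card_fin] at this
      omega
    · simp [Finset.mem_powersetCard, Finset.subset_univ]
  have h1 : (univ.filter (fun F : Finset (Fin n) => ¬ MidP n F)).card
      ≤ ∑ l ∈ ((range (n+1)).filter (fun l => ¬ (n ≤ 6*l ∧ 6*l ≤ 5*n))), ((univ : Finset (Fin n)).powersetCard l).card :=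
    le_trans (card_le_card hsub) (card_biUnion_le)
  have h2 : ∀ l ∈ ((range (n+1)).filter (fun l => ¬ (n ≤ 6*l ∧ 6*l ≤ 5*n))),
      ((univ : Finset (Fin n)).powersetCard l).card ≤ n.choose (n/6) := by
    intro l hl
    simp only [mem_filter, mem_range] at hl
    rw [Finset.card_powersetCard, card_univ, Fintype.card_fin]
    exact bad_level_le (by omega) hl.2
  have h3 : (univ.filter (fun F : Finset (Fin n) => ¬ MidP n F)).card ≤ (n+1) * n.choose (n/6) := by
    calc (univ.filter (fun F : Finset (Fin n) => ¬ MidP n F)).card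
        ≤ ∑ l ∈ _, ((univ : Finset (Fin n)).powersetCard l).card := h1
      _ ≤ ((range (n+1)).filter (fun l => ¬ (n ≤ 6*l ∧ 6*l ≤ 5*n))).card • n.choose (n/6) :=
          Finset.sum_le_card_nsmul _ _ _ h2
      _ ≤ (n+1) * n.choose (n/6) := by
          rw [smul_eq_mul]
          exact Nat.mul_le_mul_right _ (le_trans (card_filter_le _ _) (by simp))
  have hdbl : 2^(n/6) * n.choose (n/6) ≤ n.choose (n/2) := by
    have hd := choose_double (n := n) (s := n/6) (t := n/6 + n/6) (by omega) (by omega)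
    have e : n/6 + n/6 - n/6 = n/6 := by omega
    rw [e] at hd
    exact le_trans hd (choose_mono_mid (by omega) (by omega))
  calc 2^(n/6) * (univ.filter (fun F : Finset (Fin n) => ¬ MidP n F)).card
      ≤ 2^(n/6) * ((n+1) * n.choose (n/6)) := Nat.mul_le_mul_left _ h3
    _ = (n+1) * (2^(n/6) * n.choose (n/6)) := by ring
    _ ≤ (n+1) * n.choose (n/2) := Nat.mul_le_mul_left _ hdbl

lemma exp_big {k : ℕ} (hk : 1 ≤ k) (hn : 1000000 * k^3 ≤ n) : 384*k*(n+1) ≤ 2^(n/6) := by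
  have hk3 : k ≤ k^3 := Nat.le_self_pow (by norm_num) k
  have hK : 1 ≤ k^3 := by omega
  set m := n/6 with hm
  have hm1 : 166666 * k^3 ≤ m := by omega
  set q := m/2 with hq
  have hq1 : 83333 * k^3 ≤ q := by omega
  have h2 : (q+1)*(q+1) ≤ 2^m := by
    have e : m = q + (m - q) := by omega
    have b1 : q+1 ≤ 2^q := Nat.lt_two_pow_self (n := q)
    have b2 : q+1 ≤ 2^(m-q) := le_trans b1 (Nat.pow_le_pow_right (by norm_num) (by omega))
    calc (q+1)*(q+1) ≤ 2^q * 2^(m-q) := Nat.mul_le_mul b1 b2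
      _ = 2^m := by rw [← pow_add]; congr 1; omega
  have h3 : 384*k*(n+1) ≤ 4608*k*(q+1) := by
    have hn12 : n + 1 ≤ 12*q + 12 := by omega
    calc 384*k*(n+1) ≤ 384*k*(12*q+12) := Nat.mul_le_mul_left _ hn12
      _ = 4608*k*(q+1) := by ring
  have h4 : 4608*k ≤ q+1 := by
    have h5 : 4608 * k ≤ 4608 * k^3 := Nat.mul_le_mul_left _ hk3
    omega
  calc 384*k*(n+1) ≤ 4608*k*(q+1) := h3
    _ ≤ (q+1)*(q+1) := Nat.mul_le_mul_right _ h4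
    _ ≤ 2^m := h2

lemma junk_bound {k : ℕ} (hk : 2 ≤ k) (hn : 1000000*k^3 ≤ n) :
    32 + 32*k*2^(5*n/6+2) + 32*(univ.filter (fun F : Finset (Fin n) => ¬ MidP n F)).card
      ≤ n.choose (n/2) := by
  have hexp := exp_big (n := n) (k := k) (by omega) hn
  have hC := two_pow_le (n := n)
  set C := n.choose (n/2) with hCdef
  set O := (univ.filter (fun F : Finset (Fin n) => ¬ MidP n F)).card with hO
  have hout := out_card (n := n)
  rw [← hO, ← hCdef] at hout
  -- (a) 96 ≤ C
  have ha : 96 ≤ C := by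
    have h1 : 96*(n+1) ≤ 384*k*(n+1) := by nlinarith
    have h2 : 2^(n/6) ≤ 2^n := Nat.pow_le_pow_right (by norm_num) (Nat.div_le_self n 6)
    have h3 : 96*(n+1) ≤ (n+1)*C := by
      calc 96*(n+1) ≤ 384*k*(n+1) := h1
        _ ≤ 2^(n/6) := hexp
        _ ≤ 2^n := h2
        _ ≤ (n+1)*C := hC
    have := Nat.le_of_mul_le_mul_left (by calc (n+1)*96 = 96*(n+1) := by ring
      _ ≤ (n+1)*C := h3) (by omega : 0 < n+1)
    omega
  -- (b) 96*k*2^(5n/6+2) ≤ C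
  have hb : 96*k*2^(5*n/6+2) ≤ C := by
    have hsplit : n/6 + (5*n/6+2) ≤ n + 2 := by omega
    have h1 : (384*k*(n+1)) * 2^(5*n/6+2) ≤ 2^(n/6) * 2^(5*n/6+2) :=
      Nat.mul_le_mul_right _ hexp
    have h2 : 2^(n/6) * 2^(5*n/6+2) ≤ 2^(n+2) := by
      rw [← pow_add]
      exact Nat.pow_le_pow_right (by norm_num) hsplit
    have h3 : (2:ℕ)^(n+2) = 4 * 2^n := by ring
    have h4 : (384*k*(n+1)) * 2^(5*n/6+2) ≤ 4*((n+1)*C) := by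
      calc (384*k*(n+1)) * 2^(5*n/6+2) ≤ 2^(n+2) := le_trans h1 h2
        _ = 4 * 2^n := h3
        _ ≤ 4*((n+1)*C) := Nat.mul_le_mul_left _ hC
    have h5 : (4*(n+1)) * (96*k*2^(5*n/6+2)) ≤ (4*(n+1)) * C := by
      calc (4*(n+1)) * (96*k*2^(5*n/6+2)) = (384*k*(n+1)) * 2^(5*n/6+2) := by ring
        _ ≤ 4*((n+1)*C) := h4
        _ = (4*(n+1)) * C := by ring
    exact Nat.le_of_mul_le_mul_left h5 (by omega)
  -- (c) 96*O ≤ C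
  have hc : 96*O ≤ C := by
    have h1 : 96*(n+1) ≤ 2^(n/6) := by
      calc 96*(n+1) ≤ 384*k*(n+1) := by nlinarith
        _ ≤ 2^(n/6) := hexp
    have h2 : (n+1) * (96*O) ≤ (n+1) * C := by
      calc (n+1) * (96*O) = (96*(n+1)) * O := by ring
        _ ≤ 2^(n/6) * O := Nat.mul_le_mul_right _ h1
        _ ≤ (n+1)*C := hout
    exact Nat.le_of_mul_le_mul_left h2 (by omega)
  have hb' : 96*(k*2^(5*n/6+2)) ≤ C := by
    calc 96*(k*2^(5*n/6+2)) = 96*k*2^(5*n/6+2) := by ring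
      _ ≤ C := hb
  have egoal : 32*k*2^(5*n/6+2) = 32*(k*2^(5*n/6+2)) := by ring
  rw [egoal]
  omega

end C

section E
variable {n : ℕ}

lemma sigma_ge {m k : ℕ} (hm : 1 ≤ m) (hmk : m ≤ k) (hkn : 4*k ≤ n) :
    m * n.choose (n/2 - k) ≤ SigmaL n m := by
  have hterm : ∀ i ∈ Finset.Icc 1 m, n.choose (n/2 - k) ≤ n.choose ((n-m)/2 + i) := by
    intro i hi
    simp only [Finset.mem_Icc] at hi
    exact window_ge (by omega) (by omega) (by omega)
  calc m * n.choose (n/2 - k) = (Finset.Icc 1 m).card * n.choose (n/2-k) := by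
        rw [Nat.card_Icc, Nat.add_sub_cancel]
    _ ≤ SigmaL n m := by
        rw [SigmaL]
        exact Finset.card_nsmul_le_sum _ _ _ hterm

lemma erdos_bound {m : ℕ} (hm : 1 ≤ m) (hmn : m ≤ n)
    (𝒜i : Fin m → Finset (Finset (Fin n)))
    (hanti : ∀ i, IsAntichain (· ⊆ ·) ((𝒜i i : Finset (Finset (Fin n))) : Set (Finset (Fin n))))
    (𝒜 : Finset (Finset (Fin n))) (hsub : 𝒜 ⊆ Finset.univ.biUnion 𝒜i) :
    𝒜.card ≤ SigmaL n m := by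
  classical
  set B := Finset.univ.biUnion 𝒜i with hB
  set low := (n - m)/2 with hlow
  set T : Finset ℕ := (Finset.Icc 1 m).image (fun i => low + i) with hT
  have hmemT : ∀ l, l ∈ T ↔ low + 1 ≤ l ∧ l ≤ low + m := by
    intro l
    rw [hT]
    simp only [Finset.mem_image, Finset.mem_Icc]
    constructor
    · rintro ⟨i, ⟨h1, h2⟩, rfl⟩; omega
    · rintro ⟨h1, h2⟩
      refine ⟨l - low, ⟨by omega, by omega⟩, by omega⟩
  have hTcard : T.card = m := by
    rw [hT, Finset.card_image_of_injective _ (add_right_injective low), Nat.card_Icc]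
    omega
  have hTsub : T ⊆ Finset.range (n+1) := by
    intro t ht
    rw [hmemT] at ht
    simp only [Finset.mem_range]
    omega
  -- minimality of window levels
  have hlow_le : ∀ l t : ℕ, l ≤ low → low + 1 ≤ t → t ≤ low + m → n.choose l ≤ n.choose t := by
    intro l t hl ht1 ht2
    rcases le_or_gt t (n/2) with h | h
    · exact choose_mono_mid (by omega) h
    · rw [choose_symm' (by omega : t ≤ n)]
      exact choose_mono_mid (by omega) (by omega)
  have hmin : ∀ l ∈ Finset.range (n+1), l ∉ T → ∀ t ∈ T, n.choose l ≤ n.choose t := by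
    intro l hl hlT t ht
    rw [hmemT] at ht
    simp only [Finset.mem_range] at hl
    rw [hmemT] at hlT
    push_neg at hlT
    rcases le_or_gt l low with h | h
    · exact hlow_le l t h ht.1 ht.2
    · have hl2 : low + m + 1 ≤ l := by omega
      rw [choose_symm' (by omega : l ≤ n)]
      exact hlow_le (n-l) t (by omega) ht.1 ht.2
  -- counts
  have ha_le : ∀ l, (B # l).card ≤ n.choose l := by
    intro l
    have : B # l ⊆ (Finset.univ : Finset (Fin n)).powersetCard l := by
      intro A hA
      rw [Finset.mem_slice] at hA
      rw [Finset.mem_powersetCard]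
      exact ⟨Finset.subset_univ _, hA.2⟩
    calc (B # l).card ≤ _ := Finset.card_le_card this
      _ = n.choose l := by rw [Finset.card_powersetCard, Finset.card_univ, Fintype.card_fin]
  have hmass : ∑ l ∈ Finset.range (n+1), ((B # l).card : ℚ) / (n.choose l : ℚ) ≤ (m : ℚ) := by
    have hsl : ∀ l, (B # l).card ≤ ∑ i : Fin m, ((𝒜i i) # l).card := by
      intro l
      have hss : B # l ⊆ Finset.univ.biUnion (fun i => (𝒜i i) # l) := by
        intro A hA
        rw [Finset.mem_slice] at hA
        have hmem := hA.1
        rw [hB, Finset.mem_biUnion] at hmem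
        obtain ⟨i, _, hi⟩ := hmem
        exact Finset.mem_biUnion.mpr ⟨i, Finset.mem_univ i, Finset.mem_slice.mpr ⟨hi, hA.2⟩⟩
      exact le_trans (Finset.card_le_card hss) Finset.card_biUnion_le
    have hstep : ∀ l ∈ Finset.range (n+1), ((B # l).card : ℚ) / (n.choose l : ℚ)
        ≤ ∑ i : Fin m, (((𝒜i i) # l).card : ℚ) / (n.choose l : ℚ) := by
      intro l hl
      simp only [Finset.mem_range] at hl
      have hCpos : (0:ℚ) < (n.choose l : ℚ) := by
        exact_mod_cast Nat.choose_pos (by omega)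
      rw [← Finset.sum_div]
      gcongr
      exact_mod_cast hsl l
    calc ∑ l ∈ Finset.range (n+1), ((B # l).card : ℚ) / (n.choose l : ℚ)
        ≤ ∑ l ∈ Finset.range (n+1), ∑ i : Fin m, (((𝒜i i) # l).card : ℚ) / (n.choose l : ℚ) :=
          Finset.sum_le_sum hstep
      _ = ∑ i : Fin m, ∑ l ∈ Finset.range (n+1), (((𝒜i i) # l).card : ℚ) / (n.choose l : ℚ) :=
          Finset.sum_comm
      _ ≤ ∑ _i : Fin m, (1:ℚ) := by
          apply Finset.sum_le_sum
          intro i _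
          have hlym := Finset.sum_card_slice_div_choose_le_one (𝕜 := ℚ) (hanti i)
          simp only [Fintype.card_fin] at hlym
          exact hlym
      _ = (m : ℚ) := by simp
  -- LP step
  have hTne : T.Nonempty := ⟨low+1, (hmemT _).mpr ⟨le_rfl, by omega⟩⟩
  obtain ⟨t₀, ht₀T, ht₀min⟩ := T.exists_min_image (fun t => n.choose t) hTne
  set cs : ℚ := (n.choose t₀ : ℚ) with hcs
  have hcs_nonneg : 0 ≤ cs := by rw [hcs]; positivity
  have hRsplit : Finset.range (n+1) = T ∪ (Finset.range (n+1) \ T) :=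
    (Finset.union_sdiff_of_subset hTsub).symm
  have hdisj : Disjoint T (Finset.range (n+1) \ T) := Finset.disjoint_sdiff
  have hgnonneg : ∀ l : ℕ, (0:ℚ) ≤ ((B # l).card : ℚ) / (n.choose l : ℚ) := by
    intro l; exact div_nonneg (Nat.cast_nonneg _) (Nat.cast_nonneg _)
  have hSbound : ∑ l ∈ Finset.range (n+1) \ T, ((B # l).card : ℚ)
      ≤ cs * ∑ l ∈ Finset.range (n+1) \ T, ((B # l).card : ℚ) / (n.choose l : ℚ) := by
    rw [Finset.mul_sum]
    apply Finset.sum_le_sum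
    intro l hl
    have hlmem := Finset.mem_sdiff.mp hl
    have hln : l ≤ n := by
      have := hlmem.1; simp only [Finset.mem_range] at this; omega
    have hCpos : (0:ℚ) < (n.choose l : ℚ) := by exact_mod_cast Nat.choose_pos hln
    have hCle : (n.choose l : ℚ) ≤ cs := by
      rw [hcs]; exact_mod_cast hmin l hlmem.1 hlmem.2 t₀ ht₀T
    calc ((B # l).card : ℚ) = ((B # l).card : ℚ) / (n.choose l : ℚ) * (n.choose l : ℚ) := by
          rw [div_mul_cancel₀ _ hCpos.ne']
      _ ≤ ((B # l).card : ℚ) / (n.choose l : ℚ) * cs :=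
          mul_le_mul_of_nonneg_left hCle (hgnonneg l)
      _ = cs * (((B # l).card : ℚ) / (n.choose l : ℚ)) := by ring
  have hTbound : ∀ t ∈ T, ((B # t).card : ℚ) - cs * (((B # t).card : ℚ) / (n.choose t : ℚ))
      ≤ (n.choose t : ℚ) - cs := by
    intro t htT
    have htn : t ≤ n := by
      have := hTsub htT; simp only [Finset.mem_range] at this; omega
    have hCpos : (0:ℚ) < (n.choose t : ℚ) := by exact_mod_cast Nat.choose_pos htn
    have hcsle : cs ≤ (n.choose t : ℚ) := by
      rw [hcs]; exact_mod_cast ht₀min t htT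
    have hfle : ((B # t).card : ℚ) ≤ (n.choose t : ℚ) := by exact_mod_cast ha_le t
    have hgle : ((B # t).card : ℚ) / (n.choose t : ℚ) ≤ 1 := by
      rw [div_le_one hCpos]; exact hfle
    have heq : ((B # t).card : ℚ) - cs * (((B # t).card : ℚ) / (n.choose t : ℚ))
        = (((B # t).card : ℚ) / (n.choose t : ℚ)) * ((n.choose t : ℚ) - cs) := by
      rw [mul_sub, div_mul_cancel₀ _ hCpos.ne']
      ring
    rw [heq]
    calc (((B # t).card : ℚ) / (n.choose t : ℚ)) * ((n.choose t : ℚ) - cs)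
        ≤ 1 * ((n.choose t : ℚ) - cs) :=
          mul_le_mul_of_nonneg_right hgle (by linarith)
      _ = (n.choose t : ℚ) - cs := by ring
  -- combine
  have hcardB : (B.card : ℚ) = ∑ l ∈ Finset.range (n+1), ((B # l).card : ℚ) := by
    have hIic : Finset.Iic n = Finset.range (n+1) := by
      ext x; simp [Nat.lt_succ_iff]
    have := Finset.sum_card_slice (𝒜 := B) (α := Fin n)
    rw [Fintype.card_fin, hIic] at this
    rw [← this]
    push_cast
    rfl
  have hkey : (B.card : ℚ) ≤ ∑ t ∈ T, (n.choose t : ℚ) := by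
    rw [hcardB, hRsplit, Finset.sum_union hdisj]
    have hmass' : ∑ t ∈ T, ((B # t).card : ℚ) / (n.choose t : ℚ)
        + ∑ l ∈ Finset.range (n+1) \ T, ((B # l).card : ℚ) / (n.choose l : ℚ) ≤ (m:ℚ) := by
      rw [← Finset.sum_union hdisj, ← hRsplit]
      exact hmass
    have hsum_g_nonneg : (0:ℚ) ≤ ∑ t ∈ T, ((B # t).card : ℚ) / (n.choose t : ℚ) :=
      Finset.sum_nonneg (fun t _ => hgnonneg t)
    have hTsum : ∑ t ∈ T, ((B # t).card : ℚ)
        ≤ ∑ t ∈ T, (n.choose t : ℚ) - (m:ℚ)*cs + cs * ∑ t ∈ T, ((B # t).card : ℚ) / (n.choose t : ℚ) := by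
      have hsummed := Finset.sum_le_sum hTbound
      rw [Finset.sum_sub_distrib, Finset.sum_sub_distrib, Finset.sum_const, hTcard] at hsummed
      rw [← Finset.mul_sum, nsmul_eq_mul] at hsummed
      push_cast at hsummed ⊢
      linarith
    have hS2 : cs * ∑ l ∈ Finset.range (n+1) \ T, ((B # l).card : ℚ) / (n.choose l : ℚ)
        ≤ cs * ((m:ℚ) - ∑ t ∈ T, ((B # t).card : ℚ) / (n.choose t : ℚ)) := by
      apply mul_le_mul_of_nonneg_left ?_ hcs_nonneg
      linarith
    have := hSbound
    nlinarith [hSbound, hS2, hTsum]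
  have hTsum_eq : ∑ t ∈ T, (n.choose t : ℚ) = (SigmaL n m : ℚ) := by
    rw [hT, Finset.sum_image (by intro a _ b _ h; simp only at h; omega)]
    rw [SigmaL]
    push_cast
    rfl
  have hfinal : (𝒜.card : ℚ) ≤ (SigmaL n m : ℚ) := by
    calc (𝒜.card : ℚ) ≤ (B.card : ℚ) := by exact_mod_cast Finset.card_le_card hsub
      _ ≤ ∑ t ∈ T, (n.choose t : ℚ) := hkey
      _ = (SigmaL n m : ℚ) := hTsum_eq
  exact_mod_cast hfinal

end E

section F
variable {n k : ℕ}

lemma avoids_construction (hk : 2 ≤ k) (hn : k + 1 ≤ n) :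
    ∃ 𝓕 : Finset (Finset (Fin n)), 𝓕.card = SigmaL n (k-1) + 2 ∧ AvoidsRainbow n (AC k) 𝓕 := by
  classical
  set K := k - 1 with hK
  have hK1 : 1 ≤ K := by omega
  set low := (n - K)/2 with hlow
  have hlowK : low + K ≤ n - 1 := by omega
  set L : Finset (Finset (Fin n)) :=
    (Finset.Icc 1 K).biUnion (fun i => (univ : Finset (Fin n)).powersetCard (low + i)) with hL
  have hmemL : ∀ F : Finset (Fin n), F ∈ L ↔ ∃ i, 1 ≤ i ∧ i ≤ K ∧ F.card = low + i := by
    intro F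
    rw [hL]
    simp only [Finset.mem_biUnion, Finset.mem_Icc, Finset.mem_powersetCard]
    constructor
    · rintro ⟨i, ⟨h1, h2⟩, _, h4⟩; exact ⟨i, h1, h2, h4⟩
    · rintro ⟨i, h1, h2, h3⟩; exact ⟨i, ⟨h1, h2⟩, Finset.subset_univ F, h3⟩
  have hempty : (∅ : Finset (Fin n)) ∉ L := by
    rw [hmemL]; rintro ⟨i, h1, _, h3⟩; simp at h3; omega
  have huniv : (univ : Finset (Fin n)) ∉ L := by
    rw [hmemL]; rintro ⟨i, h1, h2, h3⟩
    rw [Finset.card_univ, Fintype.card_fin] at h3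
    omega
  have hEU : (∅ : Finset (Fin n)) ≠ univ := by
    intro h
    have h1 := congrArg Finset.card h
    rw [Finset.card_empty, Finset.card_univ, Fintype.card_fin] at h1
    omega
  set 𝓕 := insert (∅ : Finset (Fin n)) (insert (univ : Finset (Fin n)) L) with h𝓕
  have hLcard : L.card = SigmaL n K := by
    rw [hL, Finset.card_biUnion]
    · rw [SigmaL]
      apply Finset.sum_congr rfl
      intro i _
      rw [Finset.card_powersetCard, Finset.card_univ, Fintype.card_fin]
    · intro i hi j hj hij
      apply Finset.disjoint_left.mpr
      intro F hFi hFj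
      rw [Finset.mem_powersetCard] at hFi hFj
      exact hij (by omega)
  have hcard𝓕 : 𝓕.card = SigmaL n K + 2 := by
    rw [h𝓕, Finset.card_insert_of_notMem, Finset.card_insert_of_notMem huniv, hLcard]
    simp only [Finset.mem_insert]
    push_neg
    exact ⟨hEU, hempty⟩
  refine ⟨𝓕, by rw [hcard𝓕], ?_⟩
  refine ⟨fun F => F.card, ?_, ?_⟩
  · -- proper
    intro A _ B _ hAB hsub hcard
    exact hAB (Finset.eq_of_subset_of_card_le hsub (le_of_eq hcard.symm))
  · -- no rainbow copy
    rintro ⟨f, ⟨hmem, hinj, hiff⟩, hcinj⟩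
    -- two distinct elements trick
    have hknz : 0 < k := by omega
    have hother : ∀ p : AC k, ∃ q : AC k, q ≠ p := by
      intro p
      by_cases h0 : p = (⟨0, hknz⟩ : Fin k)
      · exact ⟨(⟨1, by omega⟩ : Fin k), by rw [h0]; intro h; exact absurd (congrArg Fin.val h) (by simp)⟩
      · exact ⟨(⟨0, hknz⟩ : Fin k), fun h => h0 (h ▸ rfl)⟩
    have hnotempty : ∀ p : AC k, f p ≠ ∅ := by
      intro p hp
      obtain ⟨q, hq⟩ := hother p
      have hsub : f p ⊆ f q := by rw [hp]; exact Finset.empty_subset _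
      have : p ≤ q := (hiff p q).mp hsub
      exact hq ((this : p = q)).symm
    have hnotuniv : ∀ p : AC k, f p ≠ univ := by
      intro p hp
      obtain ⟨q, hq⟩ := hother p
      have hsub : f q ⊆ f p := by rw [hp]; exact Finset.subset_univ _
      have : q ≤ p := (hiff q p).mp hsub
      exact hq (this : q = p)
    have hmemL' : ∀ p : AC k, f p ∈ L := by
      intro p
      have := hmem p
      rw [h𝓕, Finset.mem_insert, Finset.mem_insert] at this
      rcases this with h | h | h
      · exact absurd h (hnotempty p)
      · exact absurd h (hnotuniv p)
      · exact h
    -- pigeonhole on cardinalities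
    have hmap : ∀ p : AC k, (f p).card ∈ Finset.Icc (low+1) (low+K) := by
      intro p
      obtain ⟨i, h1, h2, h3⟩ := (hmemL (f p)).mp (hmemL' p)
      rw [Finset.mem_Icc]
      omega
    have hpig := Finset.card_le_card_of_injOn (s := (univ : Finset (Fin k)))
      (t := Finset.Icc (low+1) (low+K)) (fun p : Fin k => (f p).card)
      (fun p _ => hmap p) (fun p _ q _ h => hcinj h)
    rw [Finset.card_univ, Fintype.card_fin, Nat.card_Icc] at hpig
    omega

end F

section G

lemma snoc_pair {γ : Type*} {r : ℕ} {R : γ → γ → Prop} (g : Fin r → γ) (F : γ)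
    (hg : ∀ i j, i ≠ j → R (g i) (g j)) (hF : ∀ i, R F (g i) ∧ R (g i) F) :
    ∀ i j : Fin (r+1), i ≠ j → R ((Fin.snoc g F : Fin (r+1) → γ) i) ((Fin.snoc g F : Fin (r+1) → γ) j) := by
  intro i j
  refine Fin.lastCases ?_ ?_ i
  · refine Fin.lastCases ?_ ?_ j
    · intro h; exact absurd rfl h
    · intro j' _
      rw [Fin.snoc_last, Fin.snoc_castSucc]
      exact (hF j').1
  · intro i'
    refine Fin.lastCases ?_ ?_ j
    · intro _
      rw [Fin.snoc_last, Fin.snoc_castSucc]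
      exact (hF i').2
    · intro j' hij
      rw [Fin.snoc_castSucc, Fin.snoc_castSucc]
      exact hg i' j' (fun h => hij (by rw [h]))

lemma snoc_mem {γ : Type*} {r : ℕ} (g : Fin r → γ) (F : γ) (S : γ → Prop)
    (hg : ∀ i, S (g i)) (hF : S F) : ∀ i : Fin (r+1), S ((Fin.snoc g F : Fin (r+1) → γ) i) := by
  intro i
  refine Fin.lastCases ?_ ?_ i
  · rw [Fin.snoc_last]; exact hF
  · intro j; rw [Fin.snoc_castSucc]; exact hg j

lemma arith1 {k K' C Cmin P M : ℕ} (hKk : K' + 1 ≤ k) (hk1 : 1 ≤ k)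
    (hmin : Cmin ≤ C)
    (hA1 : 8*k*(C - Cmin) ≤ C) (hA2 : 32 + 32*(k*P) + 32*M ≤ C) :
    M + K'*C + K'*P + 1 ≤ (K'+1)*Cmin := by
  set D := C - Cmin with hD
  have hCD : C = Cmin + D := by omega
  have hKC : K'*C = K'*Cmin + K'*D := by rw [hCD]; ring
  have hgoal : (K'+1)*Cmin = K'*Cmin + Cmin := by ring
  have hKD : K'*D ≤ k*D := Nat.mul_le_mul_right _ (by omega)
  have hKP : K'*P ≤ k*P := Nat.mul_le_mul_right _ (by omega)
  have hDk : D ≤ k*D := Nat.le_mul_of_pos_left _ (by omega)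
  have hA1' : 8*(k*D) ≤ C := by
    calc 8*(k*D) = 8*k*(C - Cmin) := by rw [hD]; ring
      _ ≤ C := hA1
  rw [hgoal, hKC]
  omega

lemma arith2 {k K' C Cmin P M cb1 : ℕ} (hKk : K' + 1 ≤ k) (hk1 : 1 ≤ k)
    (hmin : Cmin ≤ C)
    (hA1 : 8*k*(C - Cmin) ≤ C) (hA2 : 32 + 32*(k*P) + 32*M ≤ C)
    (hcb : 16*cb1 ≤ 9*C) :
    M + cb1 + K'*P + (K'+1)*P + K'*C + 2 ≤ (K'+1)*Cmin := by
  set D := C - Cmin with hD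
  have hCD : C = Cmin + D := by omega
  have hKC : K'*C = K'*Cmin + K'*D := by rw [hCD]; ring
  have hgoal : (K'+1)*Cmin = K'*Cmin + Cmin := by ring
  have hKD : K'*D ≤ k*D := Nat.mul_le_mul_right _ (by omega)
  have hKP : K'*P ≤ k*P := Nat.mul_le_mul_right _ (by omega)
  have hKP1 : (K'+1)*P ≤ k*P := Nat.mul_le_mul_right _ (by omega)
  have hDk : D ≤ k*D := Nat.le_mul_of_pos_left _ (by omega)
  have hA1' : 8*(k*D) ≤ C := by
    calc 8*(k*D) = 8*k*(C - Cmin) := by rw [hD]; ring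
      _ ≤ C := hA1
  rw [hgoal, hKC]
  omega

lemma upper_bound {n k : ℕ} (hk : 2 ≤ k) (hn : 1000000 * k^3 ≤ n)
    (𝓕 : Finset (Finset (Fin n))) (hav : AvoidsRainbow n (AC k) 𝓕) :
    𝓕.card ≤ SigmaL n (k-1) + 2 := by
  classical
  obtain ⟨K, rfl⟩ : ∃ K, k = K + 1 := ⟨k-1, by omega⟩
  have hK1 : 1 ≤ K := by omega
  have hk3 : (K+1) ≤ (K+1)^3 := Nat.le_self_pow (by norm_num) _
  have hK31 : 1 ≤ (K+1)^3 := by omega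
  have hn9 : 9 ≤ n := by omega
  obtain ⟨c, hproper, hnorb⟩ := hav
  by_contra hbig
  push_neg at hbig
  rw [Nat.add_sub_cancel] at hbig
  -- no rainbow tuple, functional form
  have hnog : ∀ g : Fin (K+1) → Finset (Fin n), (∀ i, g i ∈ 𝓕) →
      (∀ i j, i ≠ j → ¬ g i ⊆ g j) → (∀ i j, i ≠ j → c (g i) ≠ c (g j)) → False := by
    intro g hmem hic hcol
    apply hnorb
    refine ⟨g, ⟨hmem, ?_, ?_⟩, ?_⟩
    · intro i j hgij
      by_contra hne
      exact hic i j hne (hgij ▸ subset_rfl)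
    · intro p p'
      constructor
      · intro hsub
        by_contra hne
        exact hic p p' (fun h => hne h) hsub
      · intro hle
        have hpe : p = p' := hle
        rw [hpe]
    · intro p p' h
      by_contra hne
      exact hcol p p' hne h
  -- basic quantities
  have hjunk := junk_bound (n := n) (k := K+1) hk hn
  have hcmin := cmin_close (n := n) (k := K+1) (by omega) (by omega)
  set M := (univ.filter (fun F : Finset (Fin n) => ¬ MidP n F)).card with hMdef
  set P := 2^(5*n/6+2) with hPdef
  set C := n.choose (n/2) with hCdef
  set Cmin := n.choose (n/2 - (K+1)) with hCmindef
  have hminle : Cmin ≤ C := by rw [hCmindef, hCdef]; exact Nat.choose_le_middle _ _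
  have hsigma : K * Cmin ≤ SigmaL n K := sigma_ge hK1 (by omega) (by omega)
  have hcb1 : 16 * cb (n-1) ≤ 9 * C := by
    have h := cb_penult (n := n) hn9
    rw [hCdef]
    exact h
  have hjunk' : 32 + 32*((K+1)*P) + 32*M ≤ C := by
    calc 32 + 32*((K+1)*P) + 32*M = 32 + 32*(K+1)*P + 32*M := by ring
      _ ≤ C := hjunk
  -- the family without extremes
  set 𝓖 := (𝓕.erase ∅).erase univ with h𝓖def
  have h𝓖sub : 𝓖 ⊆ 𝓕 :=
    Finset.Subset.trans (Finset.erase_subset _ _) (Finset.erase_subset _ _)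
  have h𝓖card : SigmaL n K + 1 ≤ 𝓖.card := by
    have h1 := Finset.pred_card_le_card_erase (s := 𝓕) (a := ∅)
    have h2 := Finset.pred_card_le_card_erase (s := 𝓕.erase ∅) (a := univ)
    rw [← h𝓖def] at h2
    omega
  -- color classes
  have hclass_anti : ∀ col, IsAntichain (· ⊆ ·)
      ((𝓕.filter (fun F => c F = col) : Finset (Finset (Fin n))) : Set (Finset (Fin n))) := by
    intro col A hA B hB hAB hsub
    rw [Finset.mem_coe, Finset.mem_filter] at hA hB
    exact hproper A hA.1 B hB.1 hAB hsub (by rw [hA.2, hB.2])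
  have hclass_card : ∀ col, (𝓕.filter (fun F => c F = col)).card ≤ C := by
    intro col
    have h := IsAntichain.sperner (hclass_anti col)
    rw [Fintype.card_fin] at h
    rw [hCdef]
    exact h
  have hcomp_mid : ∀ G : Finset (Fin n), MidP n G →
      (univ.filter (fun F : Finset (Fin n) => F ⊆ G ∨ G ⊆ F)).card ≤ P := by
    intro G hG
    rw [hPdef]
    exact comp_card_mid hG
  -- ===== greedy phase =====
  have hgreedy : ∀ r : ℕ, r ≤ K → ∃ g : Fin r → Finset (Fin n),
      (∀ i, g i ∈ 𝓖 ∧ MidP n (g i)) ∧ (∀ i j, i ≠ j → ¬ g i ⊆ g j) ∧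
      (∀ i j, i ≠ j → c (g i) ≠ c (g j)) := by
    intro r
    induction r with
    | zero =>
      intro _
      exact ⟨fun i => i.elim0, fun i => i.elim0, fun i => i.elim0, fun i => i.elim0⟩
    | succ r ih =>
      intro hrK
      obtain ⟨g, hg1, hg2, hg3⟩ := ih (by omega)
      have hCandne : (𝓖.filter (fun F => MidP n F ∧ (∀ i, ¬ F ⊆ g i ∧ ¬ g i ⊆ F)
          ∧ (∀ i, c F ≠ c (g i)))).Nonempty := by
        rw [← Finset.card_pos]
        by_contra h0
        push_neg at h0
        have hCandempty : 𝓖.filter (fun F => MidP n F ∧ (∀ i, ¬ F ⊆ g i ∧ ¬ g i ⊆ F)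
            ∧ (∀ i, c F ≠ c (g i))) = ∅ := Finset.card_eq_zero.mp (by omega)
        have hcover : 𝓖 ⊆ ((univ.filter (fun F : Finset (Fin n) => ¬ MidP n F))
            ∪ (univ : Finset (Fin r)).biUnion (fun i => 𝓕.filter (fun F => c F = c (g i))))
            ∪ (univ : Finset (Fin r)).biUnion
              (fun i => univ.filter (fun F : Finset (Fin n) => F ⊆ g i ∨ g i ⊆ F)) := by
          intro F hF
          by_cases hmid : MidP n F
          · by_cases hcomp : ∃ i, F ⊆ g i ∨ g i ⊆ F
            · obtain ⟨i, hi⟩ := hcomp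
              exact Finset.mem_union_right _ (Finset.mem_biUnion.mpr
                ⟨i, Finset.mem_univ i, Finset.mem_filter.mpr ⟨Finset.mem_univ F, hi⟩⟩)
            · by_cases hcol : ∃ i, c F = c (g i)
              · obtain ⟨i, hi⟩ := hcol
                exact Finset.mem_union_left _ (Finset.mem_union_right _
                  (Finset.mem_biUnion.mpr ⟨i, Finset.mem_univ i,
                    Finset.mem_filter.mpr ⟨h𝓖sub hF, hi⟩⟩))
              · exfalso
                push_neg at hcomp hcol
                have hFmem : F ∈ 𝓖.filter (fun F => MidP n F ∧ (∀ i, ¬ F ⊆ g i ∧ ¬ g i ⊆ F)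
                    ∧ (∀ i, c F ≠ c (g i))) := by
                  rw [Finset.mem_filter]
                  refine ⟨hF, hmid, ?_, hcol⟩
                  intro i
                  have := hcomp i
                  tauto
                rw [hCandempty] at hFmem
                exact absurd hFmem (Finset.notMem_empty F)
          · exact Finset.mem_union_left _ (Finset.mem_union_left _
              (Finset.mem_filter.mpr ⟨Finset.mem_univ F, hmid⟩))
        have hcount : 𝓖.card ≤ (M + r*C) + r*P := by
          have h1 := Finset.card_le_card hcover
          have h2 : ((univ : Finset (Fin r)).biUnion
              (fun i => 𝓕.filter (fun F => c F = c (g i)))).card ≤ r*C := by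
            refine le_trans Finset.card_biUnion_le ?_
            calc ∑ i : Fin r, (𝓕.filter (fun F => c F = c (g i))).card
                ≤ (univ : Finset (Fin r)).card • C :=
                  Finset.sum_le_card_nsmul _ _ _ (fun i _ => hclass_card (c (g i)))
              _ = r * C := by rw [Finset.card_univ, Fintype.card_fin, smul_eq_mul]
          have h3 : ((univ : Finset (Fin r)).biUnion
              (fun i => univ.filter (fun F : Finset (Fin n) => F ⊆ g i ∨ g i ⊆ F))).card ≤ r*P := by
            refine le_trans Finset.card_biUnion_le ?_
            calc ∑ i : Fin r, (univ.filter (fun F : Finset (Fin n) => F ⊆ g i ∨ g i ⊆ F)).card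
                ≤ (univ : Finset (Fin r)).card • P :=
                  Finset.sum_le_card_nsmul _ _ _ (fun i _ => hcomp_mid (g i) (hg1 i).2)
              _ = r * P := by rw [Finset.card_univ, Fintype.card_fin, smul_eq_mul]
          calc 𝓖.card ≤ _ := h1
            _ ≤ _ + ((univ : Finset (Fin r)).biUnion
                (fun i => univ.filter (fun F : Finset (Fin n) => F ⊆ g i ∨ g i ⊆ F))).card :=
                Finset.card_union_le _ _
            _ ≤ (M + r*C) + r*P := by
                refine Nat.add_le_add ?_ h3
                refine le_trans (Finset.card_union_le _ _) ?_
                rw [← hMdef]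
                exact Nat.add_le_add_left h2 M
        -- numeric contradiction
        have harith := arith1 (k := K+1) (K' := r) (by omega) (by omega) hminle hcmin
          (by calc 32 + 32*((K+1)*P) + 32*M ≤ C := hjunk'
              _ = C := rfl)
        have hrB : (r+1)*Cmin ≤ K*Cmin := Nat.mul_le_mul_right _ (by omega)
        omega
      obtain ⟨F, hF⟩ := hCandne
      rw [Finset.mem_filter] at hF
      obtain ⟨hF𝓖, hFmid, hFcomp, hFcol⟩ := hF
      refine ⟨Fin.snoc g F, ?_, ?_, ?_⟩
      · refine snoc_mem g F (fun A => A ∈ 𝓖 ∧ MidP n A) hg1 ⟨hF𝓖, hFmid⟩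
      · exact snoc_pair (R := fun A B => ¬ A ⊆ B) g F hg2 (fun i => hFcomp i)
      · exact snoc_pair (R := fun A B => c A ≠ c B) g F hg3
          (fun i => ⟨hFcol i, (hFcol i).symm⟩)
  -- ===== stuck phase =====
  obtain ⟨g, hg1, hg2, hg3⟩ := hgreedy K le_rfl
  have hstuck : ∀ F ∈ 𝓕, (∃ i, F ⊆ g i ∨ g i ⊆ F) ∨ (∃ i, c F = c (g i)) := by
    intro F hFmem
    by_contra hcon
    push_neg at hcon
    obtain ⟨hcomp, hcol⟩ := hcon
    refine hnog (Fin.snoc g F) ?_ ?_ ?_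
    · exact snoc_mem g F (fun A => A ∈ 𝓕) (fun i => h𝓖sub (hg1 i).1) hFmem
    · refine snoc_pair (R := fun A B => ¬ A ⊆ B) g F hg2 ?_
      intro i
      have := hcomp i
      tauto
    · exact snoc_pair (R := fun A B => c A ≠ c B) g F hg3
        (fun i => ⟨fun h => hcol i h, fun h => hcol i h.symm⟩)
  set CG := 𝓖.filter (fun F => ∃ i : Fin K, c F = c (g i)) with hCGdef
  set X := 𝓖.filter (fun F => ¬ ∃ i : Fin K, c F = c (g i)) with hXdef
  have hsplit : CG.card + X.card = 𝓖.card := by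
    rw [hCGdef, hXdef]
    exact Finset.card_filter_add_card_filter_not _
  have hXcard : X.card ≤ K * P := by
    have hXsub : X ⊆ (univ : Finset (Fin K)).biUnion
        (fun i => univ.filter (fun F : Finset (Fin n) => F ⊆ g i ∨ g i ⊆ F)) := by
      intro F hF
      rw [hXdef, Finset.mem_filter] at hF
      obtain ⟨hF𝓖, hFcol⟩ := hF
      rcases hstuck F (h𝓖sub hF𝓖) with ⟨i, hi⟩ | hcol
      · exact Finset.mem_biUnion.mpr ⟨i, Finset.mem_univ i,
          Finset.mem_filter.mpr ⟨Finset.mem_univ F, hi⟩⟩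
      · exact absurd hcol hFcol
    calc X.card ≤ _ := Finset.card_le_card hXsub
      _ ≤ ∑ i : Fin K, (univ.filter (fun F : Finset (Fin n) => F ⊆ g i ∨ g i ⊆ F)).card :=
          Finset.card_biUnion_le
      _ ≤ (univ : Finset (Fin K)).card • P :=
          Finset.sum_le_card_nsmul _ _ _ (fun i _ => hcomp_mid (g i) (hg1 i).2)
      _ = K * P := by rw [Finset.card_univ, Fintype.card_fin, smul_eq_mul]
  have hCGcard : CG.card ≤ SigmaL n K := by
    refine erdos_bound hK1 (by omega) (fun i => 𝓕.filter (fun F => c F = c (g i)))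
      (fun i => hclass_anti _) CG ?_
    intro F hF
    rw [hCGdef, Finset.mem_filter] at hF
    obtain ⟨hF𝓖, i, hi⟩ := hF
    exact Finset.mem_biUnion.mpr ⟨i, Finset.mem_univ i,
      Finset.mem_filter.mpr ⟨h𝓖sub hF𝓖, hi⟩⟩
  have hXne : X.Nonempty := by
    rw [← Finset.card_pos]
    omega
  obtain ⟨G₀, hG₀X⟩ := hXne
  have hG₀mem : G₀ ∈ 𝓖 ∧ ¬ ∃ i : Fin K, c G₀ = c (g i) := by
    have := hG₀X
    rw [hXdef, Finset.mem_filter] at this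
    exact this
  obtain ⟨hG₀𝓖, hG₀col'⟩ := hG₀mem
  have hG₀col : ∀ i : Fin K, c G₀ ≠ c (g i) := by
    intro i h
    exact hG₀col' ⟨i, h⟩
  have hG₀ne : G₀ ≠ ∅ ∧ G₀ ≠ univ := by
    rw [h𝓖def] at hG₀𝓖
    exact ⟨(Finset.mem_erase.mp (Finset.mem_of_mem_erase hG₀𝓖)).1,
           (Finset.mem_erase.mp hG₀𝓖).1⟩
  have hG₀card : 1 ≤ G₀.card ∧ G₀.card ≤ n - 1 := by
    constructor
    · rcases Finset.eq_empty_or_nonempty G₀ with h | h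
      · exact absurd h hG₀ne.1
      · exact Finset.card_pos.mpr h
    · have hle : G₀.card ≤ n := by
        have := G₀.card_le_univ
        rwa [Fintype.card_fin] at this
      rcases eq_or_lt_of_le hle with h | h
      · exfalso
        apply hG₀ne.2
        rw [← Finset.card_eq_iff_eq_univ, Fintype.card_fin]
        exact h
      · omega
  -- per-class lower bound
  have hCGi : ∀ i : Fin K, CG.card ≤ (𝓖.filter (fun F => c F = c (g i))).card + (K-1)*C := by
    intro i
    have hcov : CG ⊆ (𝓖.filter (fun F => c F = c (g i)))
        ∪ ((univ : Finset (Fin K)).erase i).biUnion (fun j => 𝓕.filter (fun F => c F = c (g j))) := by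
      intro F hF
      rw [hCGdef, Finset.mem_filter] at hF
      obtain ⟨hF𝓖, j, hj⟩ := hF
      rcases eq_or_ne j i with rfl | hji
      · exact Finset.mem_union_left _ (Finset.mem_filter.mpr ⟨hF𝓖, hj⟩)
      · exact Finset.mem_union_right _ (Finset.mem_biUnion.mpr
          ⟨j, Finset.mem_erase.mpr ⟨hji, Finset.mem_univ j⟩,
           Finset.mem_filter.mpr ⟨h𝓖sub hF𝓖, hj⟩⟩)
    calc CG.card ≤ _ := Finset.card_le_card hcov
      _ ≤ (𝓖.filter (fun F => c F = c (g i))).card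
          + (((univ : Finset (Fin K)).erase i).biUnion
              (fun j => 𝓕.filter (fun F => c F = c (g j)))).card := Finset.card_union_le _ _
      _ ≤ (𝓖.filter (fun F => c F = c (g i))).card + (K-1)*C := by
          refine Nat.add_le_add_left ?_ _
          refine le_trans Finset.card_biUnion_le ?_
          calc ∑ j ∈ (univ : Finset (Fin K)).erase i, (𝓕.filter (fun F => c F = c (g j))).card
              ≤ ((univ : Finset (Fin K)).erase i).card • C :=
                Finset.sum_le_card_nsmul _ _ _ (fun j _ => hclass_card (c (g j)))
            _ = (K-1)*C := by
                rw [Finset.card_erase_of_mem (Finset.mem_univ i), Finset.card_univ,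
                  Fintype.card_fin, smul_eq_mul]
  -- ===== rebuild phase =====
  have hrebuild : ∀ r : ℕ, ∀ hrK : r ≤ K, ∃ g' : Fin r → Finset (Fin n),
      (∀ j : Fin r, g' j ∈ 𝓖 ∧ MidP n (g' j)
        ∧ c (g' j) = c (g ⟨j.1, lt_of_lt_of_le j.2 hrK⟩)
        ∧ ¬ g' j ⊆ G₀ ∧ ¬ G₀ ⊆ g' j)
      ∧ (∀ i j, i ≠ j → ¬ g' i ⊆ g' j) := by
    intro r
    induction r with
    | zero =>
      intro _
      exact ⟨fun i => i.elim0, fun i => i.elim0, fun i j _ => i.elim0⟩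
    | succ r ih =>
      intro hrK
      obtain ⟨g', hg'1, hg'2⟩ := ih (by omega)
      have hi₀ : r < K := by omega
      have hCandne : ((𝓖.filter (fun F => c F = c (g ⟨r, hi₀⟩))).filter
          (fun F => MidP n F ∧ (∀ j : Fin r, ¬ F ⊆ g' j ∧ ¬ g' j ⊆ F)
            ∧ ¬ F ⊆ G₀ ∧ ¬ G₀ ⊆ F)).Nonempty := by
        rw [← Finset.card_pos]
        by_contra h0
        push_neg at h0
        have hCandempty : (𝓖.filter (fun F => c F = c (g ⟨r, hi₀⟩))).filter
            (fun F => MidP n F ∧ (∀ j : Fin r, ¬ F ⊆ g' j ∧ ¬ g' j ⊆ F)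
              ∧ ¬ F ⊆ G₀ ∧ ¬ G₀ ⊆ F) = ∅ := Finset.card_eq_zero.mp (by omega)
        have hcov : 𝓖.filter (fun F => c F = c (g ⟨r, hi₀⟩)) ⊆
            ((univ.filter (fun F : Finset (Fin n) => ¬ MidP n F))
              ∪ ((𝓕.filter (fun F => c F = c (g ⟨r, hi₀⟩))).filter
                  (fun F => F ⊆ G₀ ∨ G₀ ⊆ F)))
            ∪ (univ : Finset (Fin r)).biUnion
                (fun j => univ.filter (fun F : Finset (Fin n) => F ⊆ g' j ∨ g' j ⊆ F)) := by
          intro F hF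
          have hFcl := Finset.mem_filter.mp hF
          by_cases hmid : MidP n F
          · by_cases hcomp : ∃ j, F ⊆ g' j ∨ g' j ⊆ F
            · obtain ⟨j, hj⟩ := hcomp
              exact Finset.mem_union_right _ (Finset.mem_biUnion.mpr
                ⟨j, Finset.mem_univ j, Finset.mem_filter.mpr ⟨Finset.mem_univ F, hj⟩⟩)
            · by_cases hG₀c : F ⊆ G₀ ∨ G₀ ⊆ F
              · exact Finset.mem_union_left _ (Finset.mem_union_right _
                  (Finset.mem_filter.mpr
                    ⟨Finset.mem_filter.mpr ⟨h𝓖sub hFcl.1, hFcl.2⟩, hG₀c⟩))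
              · exfalso
                push_neg at hcomp hG₀c
                have hFmem : F ∈ (𝓖.filter (fun F => c F = c (g ⟨r, hi₀⟩))).filter
                    (fun F => MidP n F ∧ (∀ j : Fin r, ¬ F ⊆ g' j ∧ ¬ g' j ⊆ F)
                      ∧ ¬ F ⊆ G₀ ∧ ¬ G₀ ⊆ F) := by
                  rw [Finset.mem_filter]
                  refine ⟨hF, hmid, ?_, hG₀c.1, hG₀c.2⟩
                  intro j
                  have := hcomp j
                  tauto
                rw [hCandempty] at hFmem
                exact absurd hFmem (Finset.notMem_empty F)
          · exact Finset.mem_union_left _ (Finset.mem_union_left _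
              (Finset.mem_filter.mpr ⟨Finset.mem_univ F, hmid⟩))
        -- cardinalities
        have hG₀comp_card : ((𝓕.filter (fun F => c F = c (g ⟨r, hi₀⟩))).filter
            (fun F => F ⊆ G₀ ∨ G₀ ⊆ F)).card ≤ 1 + cb (n-1) :=
          antichain_comp_card hn9 (hclass_anti _) hG₀card.1 hG₀card.2
        have hcomps_card : ((univ : Finset (Fin r)).biUnion
            (fun j => univ.filter (fun F : Finset (Fin n) => F ⊆ g' j ∨ g' j ⊆ F))).card
            ≤ r * P := by
          refine le_trans Finset.card_biUnion_le ?_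
          calc ∑ j : Fin r, (univ.filter (fun F : Finset (Fin n) => F ⊆ g' j ∨ g' j ⊆ F)).card
              ≤ (univ : Finset (Fin r)).card • P :=
                Finset.sum_le_card_nsmul _ _ _ (fun j _ => hcomp_mid (g' j) (hg'1 j).2.1)
            _ = r * P := by rw [Finset.card_univ, Fintype.card_fin, smul_eq_mul]
        have hClcard : (𝓖.filter (fun F => c F = c (g ⟨r, hi₀⟩))).card
            ≤ (M + (1 + cb (n-1))) + r * P := by
          refine le_trans (Finset.card_le_card hcov) ?_
          refine le_trans (Finset.card_union_le _ _) ?_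
          refine Nat.add_le_add ?_ hcomps_card
          refine le_trans (Finset.card_union_le _ _) ?_
          rw [← hMdef]
          exact Nat.add_le_add_left hG₀comp_card M
        -- lower bound on the class
        have hlb := hCGi ⟨r, hi₀⟩
        have harith := arith2 (k := K+1) (K' := K-1) (C := C) (Cmin := Cmin) (P := P)
          (M := M) (cb1 := cb (n-1)) (by omega) (by omega) hminle hcmin hjunk' hcb1
        have hKK : K - 1 + 1 = K := by omega
        rw [hKK] at harith
        have hrP : r * P ≤ (K-1) * P := Nat.mul_le_mul_right _ (by omega)
        omega
      obtain ⟨F, hF⟩ := hCandne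
      rw [Finset.mem_filter, Finset.mem_filter] at hF
      obtain ⟨⟨hF𝓖, hFcol⟩, hFmid, hFcomp, hFG₀⟩ := hF
      refine ⟨Fin.snoc g' F, ?_, ?_⟩
      · intro j
        refine Fin.lastCases ?_ ?_ j
        · rw [Fin.snoc_last]
          exact ⟨hF𝓖, hFmid, hFcol, hFG₀.1, hFG₀.2⟩
        · intro j'
          rw [Fin.snoc_castSucc]
          exact hg'1 j'
      · exact snoc_pair (R := fun A B => ¬ A ⊆ B) g' F hg'2 (fun j => hFcomp j)
  -- ===== final contradiction =====
  obtain ⟨g', hg'1, hg'2⟩ := hrebuild K le_rfl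
  have hcol' : ∀ j : Fin K, c G₀ ≠ c (g' j) := by
    intro j h
    exact hG₀col ⟨j.1, lt_of_lt_of_le j.2 le_rfl⟩ (h.trans (hg'1 j).2.2.1)
  refine hnog (Fin.snoc g' G₀) ?_ ?_ ?_
  · exact snoc_mem g' G₀ (fun A => A ∈ 𝓕) (fun j => h𝓖sub (hg'1 j).1) (h𝓖sub hG₀𝓖)
  · refine snoc_pair (R := fun A B => ¬ A ⊆ B) g' G₀ hg'2 ?_
    intro j
    exact ⟨(hg'1 j).2.2.2.2, (hg'1 j).2.2.2.1⟩
  · refine snoc_pair (R := fun A B => c A ≠ c B) g' G₀ ?_ ?_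
    · intro i j hij
      have hci := (hg'1 i).2.2.1
      have hcj := (hg'1 j).2.2.1
      rw [hci, hcj]
      exact hg3 _ _ (fun h => hij (Fin.ext (congrArg Fin.val h)))
    · intro j
      exact ⟨hcol' j, (hcol' j).symm⟩
end G
end RB

/-- For every `k ≥ 2` there exists `n₀` such that for all `n ≥ n₀`,
`La_R^*(n, A_k) = Σ(n, k-1) + 2`. -/
theorem statement15 (k : ℕ) (hk : 2 ≤ k) :
    ∃ n₀ : ℕ, ∀ n, n₀ ≤ n → LaR n (AC k) = SigmaL n (k - 1) + 2 := by
  classical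
  refine ⟨1000000 * k^3, fun n hn => ?_⟩
  have hk3 : k ≤ k^3 := Nat.le_self_pow (by norm_num) k
  have hnk : k + 1 ≤ n := by omega
  obtain ⟨𝓕₀, h𝓕₀card, h𝓕₀av⟩ := RB.avoids_construction hk hnk
  have hub : ∀ m ∈ {m : ℕ | ∃ 𝓕 : Finset (Finset (Fin n)), 𝓕.card = m ∧ AvoidsRainbow n (AC k) 𝓕},
      m ≤ SigmaL n (k-1) + 2 := by
    rintro m ⟨𝓕, rfl, hav⟩
    exact RB.upper_bound hk hn 𝓕 hav
  have hmem : SigmaL n (k-1) + 2 ∈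
      {m : ℕ | ∃ 𝓕 : Finset (Finset (Fin n)), 𝓕.card = m ∧ AvoidsRainbow n (AC k) 𝓕} :=
    ⟨𝓕₀, h𝓕₀card, h𝓕₀av⟩
  rw [LaR]
  exact le_antisymm (csSup_le ⟨_, hmem⟩ hub) (le_csSup ⟨SigmaL n (k-1) + 2, hub⟩ hmem)
end
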